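/- arXiv:0908.4054 — 5 statements merged into one kernel-verified Lean document; each statement's English description precedes it below -/
import Mathlib

section
/- The left ideal U(𝔫̄)𝔫̄₊ of U(𝔫̄) generated by 𝔫̄₊ = 𝔫 ⊗ ℂ[t] equals Σ_{j=1}^l Σ_{m≥0} U(𝔫̄) x_{α_j}(m), the left ideal generated by the nonnegative modes of the simple root vectors. In particular, for every positive root β and every m ≥ 0, the element x_β(m) of U(𝔫̄) is a linear combination of monomials x_{α_{r_1}}(m₁) ⋯ x_{α_{r_k}}(m_k) in simple-root modes whose last exponent satisfies m_k ≥ 0. -/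
/-- The data of a finite-dimensional complex simple Lie algebra `𝔤` of type `A`, `D` or `E`
of rank `l`, recorded through: its Cartan matrix `M`; its set `Δ` of positive roots, each
written via its coordinates in the basis of simple roots (so the `i`-th simple root is
`Pi.single i 1`); and the affinization `𝔫̄ = 𝔫 ⊗ ℂ[t,t⁻¹]` of the nilpotent subalgebra
`𝔫 = ⊕_{α ∈ Δ} ℂx_α`, where `x α m` stands for `x_α ⊗ t^m`.  The weight lattice `P` is
identified with `ℤ^l` via `λ ↦ (⟨λ, α_j⟩)_j`, so that `⟨λ, α⟩ = ∑_j ⟨λ, α_j⟩ α^j` for a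
positive root `α` with simple-root coordinates `α^j`; in particular `⟨λ_i, α⟩ = α^i` and
`⟨α_i, α⟩ = ∑_j m_{ij} α^j`. -/
structure ADEContext where
  /-- the rank -/
  l : ℕ
  hl : 0 < l
  /-- the Cartan matrix -/
  M : Matrix (Fin l) (Fin l) ℤ
  M_symm : M.IsSymm
  M_diag : ∀ i, M i i = 2
  M_offdiag : ∀ i j, i ≠ j → M i j = 0 ∨ M i j = -1
  M_posdef : (M.map ((↑) : ℤ → ℝ)).PosDef
  /-- the set of positive roots, in simple-root coordinates -/
  Δ : Finset (Fin l → ℤ)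
  Δ_nonneg : ∀ α ∈ Δ, ∀ j, 0 ≤ α j
  Δ_ne_zero : ∀ α ∈ Δ, α ≠ 0
  simple_mem : ∀ i : Fin l, (Pi.single i 1 : Fin l → ℤ) ∈ Δ
  /-- every nonsimple positive root is a positive root plus a simple root -/
  Δ_decomp : ∀ α ∈ Δ, (∀ i : Fin l, α ≠ Pi.single i 1) →
    ∃ β ∈ Δ, ∃ i : Fin l, α = β + Pi.single i 1
  /-- `α_i + α_j` is a root iff `i ≠ j` and `m_{ij} = -1` (simply-laced types) -/
  sum_simple_mem_iff : ∀ i j : Fin l,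
    ((Pi.single i 1 + Pi.single j 1 : Fin l → ℤ) ∈ Δ) ↔ (i ≠ j ∧ M i j = -1)
  /-- `2α_i + α_j` is never a root (simply-laced types) -/
  two_simple_add_not_mem : ∀ i j : Fin l,
    ((2 : ℤ) • (Pi.single i 1 : Fin l → ℤ) + Pi.single j 1) ∉ Δ
  /-- the underlying type of the affinization `𝔫̄ = 𝔫 ⊗ ℂ[t,t⁻¹]` -/
  nbar : Type
  [instLieRing : LieRing nbar]
  [instLieAlgebra : LieAlgebra ℂ nbar]
  /-- `x α m` is the element `x_α ⊗ t^m` of `𝔫̄` -/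
  x : (Fin l → ℤ) → ℤ → nbar
  /-- the elements `x_α ⊗ t^m`, `α ∈ Δ`, `m ∈ ℤ`, form a `ℂ`-basis of `𝔫̄` -/
  basis : Module.Basis ({α // α ∈ Δ} × ℤ) ℂ nbar
  basis_eq : ∀ (α : {α // α ∈ Δ}) (m : ℤ), basis (α, m) = x α.1 m
  /-- the structure constants: `[x_α, x_β] = C_{α,β} x_{α+β}` -/
  C : (Fin l → ℤ) → (Fin l → ℤ) → ℂ
  C_ne_zero : ∀ α ∈ Δ, ∀ β ∈ Δ, α + β ∈ Δ → C α β ≠ 0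
  /-- the bracket `[x ⊗ t^m, y ⊗ t^n] = [x,y] ⊗ t^{m+n}` on `𝔫̄` -/
  bracket_x : ∀ α ∈ Δ, ∀ β ∈ Δ, ∀ m n : ℤ,
    ⁅x α m, x β n⁆ = if α + β ∈ Δ then C α β • x (α + β) (m + n) else 0

attribute [instance] ADEContext.instLieRing ADEContext.instLieAlgebra

namespace ADEContext

variable (ctx : ADEContext)

/-- the universal enveloping algebra `U(𝔫̄)` -/
abbrev U : Type := UniversalEnvelopingAlgebra ℂ ctx.nbar

/-- the element `x_α(m) = x_α ⊗ t^m`, viewed in `U(𝔫̄)` -/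
noncomputable def X (α : Fin ctx.l → ℤ) (m : ℤ) : ctx.U :=
  UniversalEnvelopingAlgebra.ι ℂ (ctx.x α m)

/-- the `i`-th simple root `α_i`, in simple-root coordinates -/
def sroot (i : Fin ctx.l) : Fin ctx.l → ℤ := Pi.single i 1

/-- the left ideal `U(𝔫̄)𝔫̄₊` of `U(𝔫̄)` generated by `𝔫̄₊ = 𝔫 ⊗ ℂ[t]` (equivalently, by the
elements `x_α(m)`, `α ∈ Δ`, `m ≥ 0`, which span `𝔫̄₊`) -/
noncomputable def Uplus : Submodule ctx.U ctx.U :=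
  Submodule.span ctx.U {u | ∃ α ∈ ctx.Δ, ∃ m : ℤ, 0 ≤ m ∧ u = ctx.X α m}

/-- the truncated relation `R^j_{-1,t} = ∑_{m₁,m₂ ≤ -1, m₁+m₂=-t} x_{α_j}(m₁)x_{α_j}(m₂)` -/
noncomputable def R (j : Fin ctx.l) (t : ℤ) : ctx.U :=
  ∑ m ∈ Finset.Icc (1 - t) (-1 : ℤ), ctx.X (ctx.sroot j) m * ctx.X (ctx.sroot j) (-t - m)

/-- the left ideal `J` of `U(𝔫̄)` generated by the `R^j_{-1,t}`, `j = 1, …, l`, `t ≥ 2` -/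
noncomputable def Jideal : Submodule ctx.U ctx.U :=
  Submodule.span ctx.U {u | ∃ j : Fin ctx.l, ∃ t : ℤ, 2 ≤ t ∧ u = ctx.R j t}

/-- the left ideal `I_{λ_0} = J + U(𝔫̄)𝔫̄₊` -/
noncomputable def I0 : Submodule ctx.U ctx.U := ctx.Jideal ⊔ ctx.Uplus

/-- the left ideal `I_{λ_i} = I_{λ_0} + U(𝔫̄)x_{α_i}(-1)`, `i = 1, …, l` -/
noncomputable def Ii (i : Fin ctx.l) : Submodule ctx.U ctx.U :=
  ctx.I0 ⊔ Submodule.span ctx.U {ctx.X (ctx.sroot i) (-1)}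

/-- the value `ν(α) = ∏_j ν_j^{α^j}` on `α ∈ Q` of the character `ν : Q → ℂ^×` determined by
`ν(α_j) = ν_j = νu j` -/
def charVal (νu : Fin ctx.l → ℂˣ) (α : Fin ctx.l → ℤ) : ℂ :=
  (∏ j, (νu j) ^ (α j) : ℂˣ)

end ADEContext


namespace ADEContextAux

open Submodule

variable (ctx : ADEContext)

/-- the set of monomials in simple-root modes whose last factor has nonnegative mode -/
def Sset : Set ctx.U :=
  {u | ∃ L : List (Fin ctx.l × ℤ), ∃ j : Fin ctx.l, ∃ mk : ℤ, 0 ≤ mk ∧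
    u = (L.map fun p => ctx.X (ctx.sroot p.1) p.2).prod * ctx.X (ctx.sroot j) mk}

lemma mulRight_mem {u : ctx.U} (hu : u ∈ Submodule.span ℂ (Sset ctx))
    (i : Fin ctx.l) (m : ℤ) (hm : 0 ≤ m) :
    u * ctx.X (ctx.sroot i) m ∈ Submodule.span ℂ (Sset ctx) := by
  induction hu using Submodule.span_induction with
  | mem v hv =>
      obtain ⟨L, j, mk, hmk, rfl⟩ := hv
      refine Submodule.subset_span ⟨L ++ [(j, mk)], i, m, hm, ?_⟩
      simp [mul_assoc]
  | zero => simp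
  | add a b ha hb iha ihb => rw [add_mul]; exact Submodule.add_mem _ iha ihb
  | smul c a ha iha => rw [smul_mul_assoc]; exact Submodule.smul_mem _ _ iha

lemma mulLeft_mem {u : ctx.U} (hu : u ∈ Submodule.span ℂ (Sset ctx))
    (i : Fin ctx.l) (m : ℤ) :
    ctx.X (ctx.sroot i) m * u ∈ Submodule.span ℂ (Sset ctx) := by
  induction hu using Submodule.span_induction with
  | mem v hv =>
      obtain ⟨L, j, mk, hmk, rfl⟩ := hv
      refine Submodule.subset_span ⟨(i, m) :: L, j, mk, hmk, ?_⟩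
      simp [mul_assoc]
  | zero => simp
  | add a b ha hb iha ihb => rw [mul_add]; exact Submodule.add_mem _ iha ihb
  | smul c a ha iha => rw [mul_smul_comm]; exact Submodule.smul_mem _ _ iha

lemma X_mem_span : ∀ β ∈ ctx.Δ, ∀ m : ℤ, 0 ≤ m →
    ctx.X β m ∈ Submodule.span ℂ (Sset ctx) := by
  suffices H : ∀ n : ℕ, ∀ β ∈ ctx.Δ, (∑ j, β j).toNat = n → ∀ m : ℤ, 0 ≤ m →
      ctx.X β m ∈ Submodule.span ℂ (Sset ctx) by
    exact fun β hβ m hm => H _ β hβ rfl m hm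
  intro n
  induction n using Nat.strong_induction_on with
  | _ n IH =>
    intro β hβ hn m hm
    by_cases hs : ∃ i, β = Pi.single i 1
    · obtain ⟨i, rfl⟩ := hs
      exact Submodule.subset_span ⟨[], i, m, hm, by simp [ADEContext.sroot]⟩
    · push_neg at hs
      obtain ⟨γ, hγ, i, hβγ⟩ := ctx.Δ_decomp β hβ hs
      have hsi := ctx.simple_mem i
      set c := ctx.C γ (Pi.single i 1) with hc_def
      have hc : c ≠ 0 := ctx.C_ne_zero γ hγ _ hsi (by rw [← hβγ]; exact hβ)
      have h1 : ⁅ctx.x γ 0, ctx.x (ctx.sroot i) m⁆ = c • ctx.x β m := by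
        rw [show ctx.sroot i = Pi.single i 1 from rfl, ctx.bracket_x γ hγ _ hsi 0 m,
          if_pos (by rw [← hβγ]; exact hβ), ← hβγ, zero_add]
      have h2 : ctx.X γ 0 * ctx.X (ctx.sroot i) m - ctx.X (ctx.sroot i) m * ctx.X γ 0
          = c • ctx.X β m := by
        have := congrArg (UniversalEnvelopingAlgebra.ι ℂ) h1
        letI instU := LieRing.ofAssociativeRing (A := ctx.U)
        rwa [LieHom.map_lie, map_smul, Ring.lie_def] at this
      have key : ctx.X β m = c⁻¹ • (ctx.X γ 0 * ctx.X (ctx.sroot i) m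
          - ctx.X (ctx.sroot i) m * ctx.X γ 0) := by
        rw [h2, smul_smul, inv_mul_cancel₀ hc, one_smul]
      have hsum : ∑ j, β j = (∑ j, γ j) + 1 := by
        subst hβγ
        simp [Finset.sum_add_distrib]
      have hγnn : 0 ≤ ∑ j, γ j :=
        Finset.sum_nonneg fun j _ => ctx.Δ_nonneg γ hγ j
      have hlt : (∑ j, γ j).toNat < n := by
        rw [← hn, hsum]; omega
      have hγ0 : ctx.X γ 0 ∈ Submodule.span ℂ (Sset ctx) :=
        IH _ hlt γ hγ rfl 0 le_rfl
      rw [key]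
      exact Submodule.smul_mem _ _ (Submodule.sub_mem _
        (mulRight_mem ctx hγ0 i m hm) (mulLeft_mem ctx hγ0 i m))

end ADEContextAux

/-- The left ideal `U(𝔫̄)𝔫̄₊` of `U(𝔫̄)` generated by `𝔫̄₊ = 𝔫 ⊗ ℂ[t]` equals
`Σ_{j=1}^l Σ_{m ≥ 0} U(𝔫̄)x_{α_j}(m)`, the left ideal generated by the nonnegative modes of
the simple root vectors.  In particular, for every positive root `β` and every `m ≥ 0`, the
element `x_β(m)` of `U(𝔫̄)` is a `ℂ`-linear combination of monomials
`x_{α_{r_1}}(m₁) ⋯ x_{α_{r_k}}(m_k)` in simple-root modes whose last exponent satisfies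
`m_k ≥ 0`. -/
theorem left_ideal_nplus_eq_simple_modes (ctx : ADEContext) :
    ctx.Uplus = Submodule.span ctx.U
        {u | ∃ j : Fin ctx.l, ∃ m : ℤ, 0 ≤ m ∧ u = ctx.X (ctx.sroot j) m} ∧
    ∀ β ∈ ctx.Δ, ∀ m : ℤ, 0 ≤ m →
      ctx.X β m ∈ Submodule.span ℂ
        {u | ∃ L : List (Fin ctx.l × ℤ), ∃ j : Fin ctx.l, ∃ mk : ℤ, 0 ≤ mk ∧
          u = (L.map fun p => ctx.X (ctx.sroot p.1) p.2).prod * ctx.X (ctx.sroot j) mk} := by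
  constructor
  · apply le_antisymm
    · rw [ADEContext.Uplus, Submodule.span_le]
      rintro u ⟨α, hα, m, hm, rfl⟩
      have hmem := ADEContextAux.X_mem_span ctx α hα m hm
      have hsub : Submodule.span ℂ (ADEContextAux.Sset ctx) ≤
          (Submodule.span ctx.U
            {u | ∃ j : Fin ctx.l, ∃ m : ℤ, 0 ≤ m ∧ u = ctx.X (ctx.sroot j) m}).restrictScalars ℂ := by
        rw [Submodule.span_le]
        rintro v ⟨L, j, mk, hmk, rfl⟩
        show _ ∈ Submodule.span ctx.U {u | ∃ j : Fin ctx.l, ∃ m : ℤ, 0 ≤ m ∧ u = ctx.X (ctx.sroot j) m}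
        rw [← smul_eq_mul]
        exact Submodule.smul_mem _ _ (Submodule.subset_span ⟨j, mk, hmk, rfl⟩)
      exact hsub hmem
    · rw [Submodule.span_le]
      rintro u ⟨j, m, hm, rfl⟩
      exact Submodule.subset_span ⟨ctx.sroot j, ctx.simple_mem j, m, hm, rfl⟩
  · exact ADEContextAux.X_mem_span ctx
end

section
/- (Lemma 3.1) For every i = 1, …, l and every character ν : Q → ℂ^×, the automorphism τ_{λ_i,ν} of U(𝔫̄) maps I_{λ_0} into I_{λ_i}: τ_{λ_i,ν}(I_{λ_0}) ⊆ I_{λ_i}. -/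
section Aux

namespace ADEContext

variable (ctx : ADEContext)

lemma sroot_def (j : Fin ctx.l) : ctx.sroot j = Pi.single j 1 := rfl

lemma X_def (α : Fin ctx.l → ℤ) (m : ℤ) :
    ctx.X α m = UniversalEnvelopingAlgebra.ι ℂ (ctx.x α m) := rfl

lemma mul_mem_left' {S : Submodule ctx.U ctx.U} (a : ctx.U) {u : ctx.U}
    (hu : u ∈ S) : a * u ∈ S := by
  simpa [smul_eq_mul] using S.smul_mem a hu

lemma csmul_mem' {S : Submodule ctx.U ctx.U} (c : ℂ) {u : ctx.U}
    (hu : u ∈ S) : c • u ∈ S := by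
  rw [← algebraMap_smul ctx.U c u]
  exact S.smul_mem _ hu

lemma Jideal_le_Ii (i : Fin ctx.l) : ctx.Jideal ≤ ctx.Ii i :=
  le_trans le_sup_left le_sup_left

lemma Uplus_le_Ii (i : Fin ctx.l) : ctx.Uplus ≤ ctx.Ii i :=
  le_trans le_sup_right le_sup_left

lemma X_neg_one_mem_Ii (i : Fin ctx.l) : ctx.X (ctx.sroot i) (-1) ∈ ctx.Ii i :=
  Submodule.mem_sup_right (Submodule.mem_span_singleton_self _)

lemma X_mem_Uplus {α : Fin ctx.l → ℤ} (hα : α ∈ ctx.Δ) {m : ℤ} (hm : 0 ≤ m) :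
    ctx.X α m ∈ ctx.Uplus :=
  Submodule.subset_span ⟨α, hα, m, hm, rfl⟩

lemma sroot_mem (j : Fin ctx.l) : ctx.sroot j ∈ ctx.Δ := ctx.simple_mem j

/-- bracket relation in `U`. -/
lemma X_bracket {α β : Fin ctx.l → ℤ} (hα : α ∈ ctx.Δ) (hβ : β ∈ ctx.Δ)
    (m n : ℤ) :
    ctx.X α m * ctx.X β n - ctx.X β n * ctx.X α m
      = if α + β ∈ ctx.Δ then ctx.C α β • ctx.X (α + β) (m + n) else 0 := by
  letI : LieRing ctx.U := LieRing.ofAssociativeRing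
  letI : LieAlgebra ℂ ctx.U := LieAlgebra.ofAssociativeAlgebra
  have := (UniversalEnvelopingAlgebra.ι ℂ (L := ctx.nbar)).map_lie
    (ctx.x α m) (ctx.x β n)
  rw [ctx.bracket_x _ hα _ hβ, Ring.lie_def] at this
  rw [X_def, X_def, ← this]
  split
  · rw [map_smul, X_def]
  · rw [map_zero]

/-- `x_{α_j}(a)` and `x_{α_j}(b)` commute in `U(𝔫̄)` (since `2α_j` is not a root). -/
lemma X_simple_comm (j : Fin ctx.l) (a b : ℤ) :
    ctx.X (ctx.sroot j) a * ctx.X (ctx.sroot j) b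
      = ctx.X (ctx.sroot j) b * ctx.X (ctx.sroot j) a := by
  have hnot : ctx.sroot j + ctx.sroot j ∉ ctx.Δ := by
    rw [sroot_def, ctx.sum_simple_mem_iff]
    simp
  have h := ctx.X_bracket (ctx.sroot_mem j) (ctx.sroot_mem j) a b
  rw [if_neg hnot, sub_eq_zero] at h
  exact h

lemma sum_single (j : Fin ctx.l) : ∑ k, (Pi.single j 1 : Fin ctx.l → ℤ) k = 1 := by
  rw [Finset.sum_pi_single']
  simp

/-- Key lemma: `x_α(m) ∈ I_{λ_i}` whenever `α ∈ Δ` and `m ≥ -⟨λ_i, α⟩ = -α^i`. -/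
lemma X_mem_Ii (i : Fin ctx.l) :
    ∀ N : ℕ, ∀ α ∈ ctx.Δ, (∑ k, α k) ≤ N → ∀ m : ℤ, -α i ≤ m →
      ctx.X α m ∈ ctx.Ii i := by
  intro N
  induction N with
  | zero =>
    intro α hα hsum m _
    exfalso
    apply ctx.Δ_ne_zero α hα
    funext k
    have h1 : ∀ k, 0 ≤ α k := ctx.Δ_nonneg α hα
    have h2 : ∑ k, α k = 0 := le_antisymm (by exact_mod_cast hsum)
      (Finset.sum_nonneg fun k _ => h1 k)
    have := (Finset.sum_eq_zero_iff_of_nonneg (fun k _ => h1 k)).mp h2 k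
      (Finset.mem_univ k)
    simpa using this
  | succ N ih =>
    intro α hα hsum m hm
    by_cases hs : ∀ i0 : Fin ctx.l, α ≠ Pi.single i0 1
    · obtain ⟨β, hβ, j, hαβ0⟩ := ctx.Δ_decomp α hα hs
      have hαβ : α = β + ctx.sroot j := hαβ0
      set δ : ℤ := ctx.sroot j i with hδ
      have hδ01 : δ = 0 ∨ δ = 1 := by
        by_cases hji : j = i
        · right; rw [hδ, sroot_def, hji, Pi.single_eq_same]
        · left; rw [hδ, sroot_def, Pi.single_eq_of_ne (Ne.symm hji)]
      have hsimple : ctx.X (ctx.sroot j) (-δ) ∈ ctx.Ii i := by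
        rcases hδ01 with h0 | h1
        · rw [h0]
          exact ctx.Uplus_le_Ii i (ctx.X_mem_Uplus (ctx.sroot_mem j) le_rfl)
        · rw [h1]
          have hji : j = i := by
            by_contra hji
            rw [hδ, sroot_def, Pi.single_eq_of_ne (Ne.symm hji)] at h1
            exact absurd h1 (by norm_num)
          rw [hji]
          exact ctx.X_neg_one_mem_Ii i
      have hβsum : (∑ k, β k) ≤ (N : ℤ) := by
        have h5 : ∑ k, α k = (∑ k, β k) + 1 := by
          rw [hαβ, sroot_def]
          simp only [Pi.add_apply]
          rw [Finset.sum_add_distrib, ctx.sum_single j]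
        push_cast at hsum
        omega
      have hβi : -β i ≤ m + δ := by
        have : α i = β i + δ := by rw [hαβ]; rfl
        omega
      have hXβ : ctx.X β (m + δ) ∈ ctx.Ii i := ih β hβ hβsum (m + δ) hβi
      have hsum_mem : β + ctx.sroot j ∈ ctx.Δ := by rw [← hαβ]; exact hα
      have hbr := ctx.X_bracket hβ (ctx.sroot_mem j) (m + δ) (-δ)
      rw [if_pos hsum_mem] at hbr
      have hC : ctx.C β (ctx.sroot j) ≠ 0 :=
        ctx.C_ne_zero β hβ _ (ctx.sroot_mem j) hsum_mem
      have hXα : ctx.X α m = (ctx.C β (ctx.sroot j))⁻¹ •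
          (ctx.X β (m + δ) * ctx.X (ctx.sroot j) (-δ)
            - ctx.X (ctx.sroot j) (-δ) * ctx.X β (m + δ)) := by
        rw [hbr, smul_smul, inv_mul_cancel₀ hC, one_smul, hαβ]
        congr 1
        omega
      rw [hXα]
      refine ctx.csmul_mem' _ (sub_mem ?_ ?_)
      · exact ctx.mul_mem_left' _ hsimple
      · exact ctx.mul_mem_left' _ hXβ
    · push_neg at hs
      obtain ⟨i0, rfl⟩ := hs
      by_cases hii : i0 = i
      · subst hii
        have hαi : (Pi.single i0 1 : Fin ctx.l → ℤ) i0 = 1 := Pi.single_eq_same _ _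
        rw [hαi] at hm
        rcases eq_or_lt_of_le hm with h | h
        · rw [← h]
          exact ctx.X_neg_one_mem_Ii i0
        · exact ctx.Uplus_le_Ii i0 (ctx.X_mem_Uplus (ctx.simple_mem i0) (by omega))
      · have hαi : (Pi.single i0 1 : Fin ctx.l → ℤ) i = 0 :=
          Pi.single_eq_of_ne (Ne.symm hii) _
        rw [hαi] at hm
        exact ctx.Uplus_le_Ii i (ctx.X_mem_Uplus (ctx.simple_mem i0) (by simpa using hm))

end ADEContext

end Aux

section Aux2

namespace ADEContext

variable (ctx : ADEContext)

lemma tau_R_mem (i : Fin ctx.l) (νu : Fin ctx.l → ℂˣ) (τ : ctx.U ≃ₐ[ℂ] ctx.U)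
    (hτ : ∀ α ∈ ctx.Δ, ∀ m : ℤ,
      τ (ctx.X α m) = ctx.charVal νu α • ctx.X α (m - α i))
    (j : Fin ctx.l) (t : ℤ) (ht : 2 ≤ t) : τ (ctx.R j t) ∈ ctx.Ii i := by
  set c : ℂ := ctx.charVal νu (ctx.sroot j) with hc
  set δ : ℤ := ctx.sroot j i with hδ
  have hstep : τ (ctx.R j t) = (c * c) • ∑ m ∈ Finset.Icc (1 - t) (-1 : ℤ),
      ctx.X (ctx.sroot j) (m - δ) * ctx.X (ctx.sroot j) (-t - m - δ) := by
    rw [ADEContext.R, map_sum, Finset.smul_sum]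
    refine Finset.sum_congr rfl fun m _ => ?_
    rw [map_mul, hτ _ (ctx.sroot_mem j) m, hτ _ (ctx.sroot_mem j) (-t - m),
      smul_mul_smul_comm]
  by_cases hji : j = i
  · subst hji
    have hδ1 : δ = 1 := by rw [hδ, sroot_def, Pi.single_eq_same]
    rw [hδ1] at hstep
    set f : ℤ → ctx.U := fun m =>
      ctx.X (ctx.sroot j) m * ctx.X (ctx.sroot j) (-(t + 2) - m) with hf
    have hre : (∑ m ∈ Finset.Icc (1 - t) (-1 : ℤ),
        ctx.X (ctx.sroot j) (m - 1) * ctx.X (ctx.sroot j) (-t - m - 1))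
        = ∑ m ∈ Finset.Icc (-t) (-2 : ℤ), f m := by
      have hmap : Finset.Icc (-t) (-2 : ℤ)
          = (Finset.Icc (1 - t) (-1 : ℤ)).map (addRightEmbedding (-1)) := by
        rw [Finset.map_add_right_Icc]
        congr 1 <;> ring
      rw [hmap, Finset.sum_map]
      refine Finset.sum_congr rfl fun m _ => ?_
      simp only [addRightEmbedding_apply, hf]
      rw [show m + -1 = m - 1 from by ring, show -(t + 2) - (m - 1) = -t - m - 1 from by ring]
    have hsub : Finset.Icc (-t) (-2 : ℤ) ⊆ Finset.Icc (-t - 1) (-1 : ℤ) := by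
      intro x hx
      simp only [Finset.mem_Icc] at hx ⊢
      omega
    have hdiff : Finset.Icc (-t - 1) (-1 : ℤ) \ Finset.Icc (-t) (-2 : ℤ)
        = {-t - 1, -1} := by
      ext z
      simp only [Finset.mem_sdiff, Finset.mem_Icc, Finset.mem_insert,
        Finset.mem_singleton]
      omega
    have hpair : ∑ m ∈ ({-t - 1, -1} : Finset ℤ), f m = f (-t - 1) + f (-1) :=
      Finset.sum_pair (by omega)
    have hsplit : ∑ m ∈ Finset.Icc (-t) (-2 : ℤ), f m
        = ctx.R j (t + 2) - f (-t - 1) - f (-1) := by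
      have hRsum : ctx.R j (t + 2) = ∑ m ∈ Finset.Icc (-t - 1) (-1 : ℤ), f m := by
        rw [ADEContext.R]
        congr 1
        congr 1
        ring
      have h6 := Finset.sum_sdiff (f := f) hsub
      rw [hdiff, hpair] at h6
      rw [hRsum, ← h6]
      abel
    have hf1 : f (-t - 1) = ctx.X (ctx.sroot j) (-t - 1) * ctx.X (ctx.sroot j) (-1) := by
      have e : -(t + 2) - (-t - 1) = (-1 : ℤ) := by ring
      simp only [hf, e]
    have hf2 : f (-1) = ctx.X (ctx.sroot j) (-t - 1) * ctx.X (ctx.sroot j) (-1) := by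
      have e : -(t + 2) - (-1 : ℤ) = -t - 1 := by ring
      simp only [hf, e]
      exact ctx.X_simple_comm j (-1) (-t - 1)
    rw [hstep, hre, hsplit]
    refine ctx.csmul_mem' _ (sub_mem (sub_mem ?_ ?_) ?_)
    · exact ctx.Jideal_le_Ii j (Submodule.subset_span ⟨j, t + 2, by omega, rfl⟩)
    · rw [hf1]
      exact ctx.mul_mem_left' _ (ctx.X_neg_one_mem_Ii j)
    · rw [hf2]
      exact ctx.mul_mem_left' _ (ctx.X_neg_one_mem_Ii j)
  · have hδ0 : δ = 0 := by rw [hδ, sroot_def, Pi.single_eq_of_ne (Ne.symm hji)]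
    rw [hδ0] at hstep
    simp only [sub_zero] at hstep
    rw [hstep]
    exact ctx.csmul_mem' _
      (ctx.Jideal_le_Ii i (Submodule.subset_span ⟨j, t, ht, rfl⟩))

end ADEContext

end Aux2

/-- (Lemma 3.1)  For every `i = 1, …, l` and every character `ν : Q → ℂ^×` (determined by its
values `νu j = ν(α_j)`), the automorphism `τ_{λ_i,ν}` of `U(𝔫̄)` — i.e. the algebra
automorphism acting on generators by `x_α(m) ↦ ν(α) x_α(m - ⟨λ_i, α⟩)`, where
`⟨λ_i, α⟩ = α^i` is the `i`-th simple-root coordinate of `α` — maps `I_{λ_0}` into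
`I_{λ_i}`. -/
theorem tau_lambda_maps_I0_into_Ii (ctx : ADEContext) (i : Fin ctx.l)
    (νu : Fin ctx.l → ℂˣ) (τ : ctx.U ≃ₐ[ℂ] ctx.U)
    (hτ : ∀ α ∈ ctx.Δ, ∀ m : ℤ,
      τ (ctx.X α m) = ctx.charVal νu α • ctx.X α (m - α i)) :
    ∀ u ∈ ctx.I0, τ u ∈ ctx.Ii i := by
  intro u hu
  obtain ⟨a, ha, b, hb, rfl⟩ := Submodule.mem_sup.mp hu
  rw [map_add]
  refine add_mem ?_ ?_
  · refine Submodule.span_induction (p := fun v _ => τ v ∈ ctx.Ii i) ?_ ?_ ?_ ?_ ha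
    · rintro v ⟨j, t, ht, rfl⟩
      exact ctx.tau_R_mem i νu τ hτ j t ht
    · show τ (0 : ctx.U) ∈ ctx.Ii i
      rw [map_zero]; exact zero_mem _
    · intro v w _ _ hv hw
      show τ (v + w) ∈ ctx.Ii i
      rw [map_add]; exact add_mem hv hw
    · intro r v _ hv
      show τ (r • v) ∈ ctx.Ii i
      rw [smul_eq_mul, map_mul]
      exact ctx.mul_mem_left' _ hv
  · refine Submodule.span_induction (p := fun v _ => τ v ∈ ctx.Ii i) ?_ ?_ ?_ ?_ hb
    · rintro v ⟨α, hα, m, hm, rfl⟩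
      rw [hτ α hα m]
      refine ctx.csmul_mem' _ ?_
      refine ctx.X_mem_Ii i (∑ k, α k).toNat α hα ?_ (m - α i) (by omega)
      exact Int.self_le_toNat _
    · show τ (0 : ctx.U) ∈ ctx.Ii i
      rw [map_zero]; exact zero_mem _
    · intro v w _ _ hv hw
      show τ (v + w) ∈ ctx.Ii i
      rw [map_add]; exact add_mem hv hw
    · intro r v _ hv
      show τ (r • v) ∈ ctx.Ii i
      rw [smul_eq_mul, map_mul]
      exact ctx.mul_mem_left' _ hv
end

section
/- For every i = 1, …, l and every character ν : Q → ℂ^×, the automorphism τ_{λ_i,ν} of U(𝔫̄) maps the left ideal U(𝔫̄)𝔫̄₊ into I_{λ_i}: τ_{λ_i,ν}(U(𝔫̄)𝔫̄₊) ⊆ I_{λ_i}. -/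
section Aux

variable (ctx : ADEContext) (i : Fin ctx.l)

lemma aux_Uplus_le_Ii : ctx.Uplus ≤ ctx.Ii i :=
  le_trans le_sup_right (le_sup_left : ctx.I0 ≤ ctx.Ii i)

lemma aux_mem_Uplus {α : Fin ctx.l → ℤ} (hα : α ∈ ctx.Δ) {m : ℤ} (hm : 0 ≤ m) :
    ctx.X α m ∈ ctx.Uplus :=
  Submodule.subset_span ⟨α, hα, m, hm, rfl⟩

lemma aux_xi_mem : ctx.X (ctx.sroot i) (-1) ∈ ctx.Ii i :=
  (le_sup_right : _ ≤ ctx.Ii i) (Submodule.mem_span_singleton_self _)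

lemma aux_smulC_mem {v : ctx.U} (c : ℂ) (hv : v ∈ ctx.Ii i) : c • v ∈ ctx.Ii i := by
  rw [Algebra.smul_def, ← smul_eq_mul]
  exact Submodule.smul_mem _ _ hv

lemma aux_mul_mem (u : ctx.U) {v : ctx.U} (hv : v ∈ ctx.Ii i) : u * v ∈ ctx.Ii i := by
  rw [← smul_eq_mul]
  exact Submodule.smul_mem _ _ hv

lemma aux_key : ∀ N : ℕ, ∀ α ∈ ctx.Δ, (∑ j, α j).toNat ≤ N →
    ∀ n : ℤ, -α i ≤ n → ctx.X α n ∈ ctx.Ii i := by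
  intro N
  induction N with
  | zero =>
    intro α hα hht n _
    exfalso
    have hnn : ∀ j ∈ Finset.univ, (0:ℤ) ≤ α j := fun j _ => ctx.Δ_nonneg α hα j
    have hsum0 : (∑ j, α j) = 0 := by
      have h1 : (0:ℤ) ≤ ∑ j, α j := Finset.sum_nonneg hnn
      have h2 : (∑ j, α j) ≤ 0 := by
        have := Int.toNat_le.mp hht
        simpa using this
      omega
    have : ∀ j ∈ Finset.univ, α j = 0 :=
      (Finset.sum_eq_zero_iff_of_nonneg hnn).mp hsum0
    exact ctx.Δ_ne_zero α hα (funext fun j => this j (Finset.mem_univ j))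
  | succ N ih =>
    intro α hα hht n hn
    by_cases hs : ∃ j : Fin ctx.l, α = Pi.single j 1
    · obtain ⟨j, rfl⟩ := hs
      have hαi : (Pi.single j 1 : Fin ctx.l → ℤ) i = if i = j then 1 else 0 :=
        Pi.single_apply j 1 i
      by_cases hij : i = j
      · subst hij
        rcases le_or_gt 0 n with h0 | h0
        · exact aux_Uplus_le_Ii ctx i (aux_mem_Uplus ctx hα h0)
        · have : n = -1 := by rw [hαi] at hn; simp at hn; omega
          rw [this]
          exact aux_xi_mem ctx i
      · have h0 : 0 ≤ n := by rw [hαi] at hn; simp [hij] at hn; omega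
        exact aux_Uplus_le_Ii ctx i (aux_mem_Uplus ctx hα h0)
    · push_neg at hs
      obtain ⟨β, hβ, j, hdec⟩ := ctx.Δ_decomp α hα hs
      -- heights
      have hsum_single : (∑ k, (Pi.single j 1 : Fin ctx.l → ℤ) k) = 1 := by
        simp [Pi.single_apply]
      have hsumα : (∑ k, α k) = (∑ k, β k) + 1 := by
        rw [hdec]
        simp [Finset.sum_add_distrib, hsum_single]
      have hβnn : (0:ℤ) ≤ ∑ k, β k :=
        Finset.sum_nonneg (fun k _ => ctx.Δ_nonneg β hβ k)
      have hhtβ : (∑ k, β k).toNat ≤ N := by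
        have hαle : (∑ k, α k) ≤ (N:ℤ) + 1 := by
          have := Int.toNat_le.mp hht
          simpa using this
        rw [Int.toNat_le]
        omega
      -- coordinates at i
      set d : ℤ := if i = j then 1 else 0 with hd
      have hαi : α i = β i + d := by
        rw [hdec, Pi.add_apply, Pi.single_apply]
      -- the two factors
      have hxj : ctx.X (ctx.sroot j) (-d) ∈ ctx.Ii i := by
        by_cases hij : i = j
        · subst hij
          simp only [hd, if_pos rfl]
          exact aux_xi_mem ctx i
        · have : d = 0 := by simp [hd, hij]
          rw [this]
          exact aux_Uplus_le_Ii ctx i (aux_mem_Uplus ctx (ctx.simple_mem j) le_rfl)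
      have hxβ : ctx.X β (n + d) ∈ ctx.Ii i :=
        ih β hβ hhtβ (n + d) (by omega)
      -- bracket relation
      have hsj : ctx.sroot j ∈ ctx.Δ := ctx.simple_mem j
      have hαΔ : β + ctx.sroot j ∈ ctx.Δ := by rw [ADEContext.sroot, ← hdec]; exact hα
      have hbr := ctx.bracket_x β hβ (ctx.sroot j) hsj (n + d) (-d)
      rw [if_pos hαΔ] at hbr
      have hC : ctx.C β (ctx.sroot j) ≠ 0 := ctx.C_ne_zero β hβ (ctx.sroot j) hsj hαΔ
      have hιbr : ctx.C β (ctx.sroot j) • ctx.X (β + ctx.sroot j) (n + d + -d) =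
          ctx.X β (n + d) * ctx.X (ctx.sroot j) (-d)
            - ctx.X (ctx.sroot j) (-d) * ctx.X β (n + d) := by
        letI : LieRing ctx.U := LieRing.ofAssociativeRing
        have := (UniversalEnvelopingAlgebra.ι ℂ (L := ctx.nbar)).map_lie
          (ctx.x β (n + d)) (ctx.x (ctx.sroot j) (-d))
        rw [hbr, map_smul] at this
        rw [ADEContext.X, this, Ring.lie_def]
        rfl
      have hmem : ctx.C β (ctx.sroot j) • ctx.X (β + ctx.sroot j) (n + d + -d) ∈ ctx.Ii i := by
        rw [hιbr]
        exact Submodule.sub_mem _ (aux_mul_mem ctx i _ hxj) (aux_mul_mem ctx i _ hxβ)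
      have := aux_smulC_mem ctx i (ctx.C β (ctx.sroot j))⁻¹ hmem
      rw [smul_smul, inv_mul_cancel₀ hC, one_smul] at this
      have heq : β + ctx.sroot j = α := by rw [ADEContext.sroot, ← hdec]
      have hneq : n + d + -d = n := by ring
      rwa [heq, hneq] at this

end Aux

/-- For every `i = 1, …, l` and every character `ν : Q → ℂ^×` (determined by its values
`νu j = ν(α_j)`), the automorphism `τ_{λ_i,ν}` of `U(𝔫̄)` — i.e. the algebra automorphism
acting on generators by `x_α(m) ↦ ν(α) x_α(m - ⟨λ_i, α⟩)`, where `⟨λ_i, α⟩ = α^i` — maps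
the left ideal `U(𝔫̄)𝔫̄₊` into `I_{λ_i}`. -/
theorem tau_lambda_maps_Uplus_into_Ii (ctx : ADEContext) (i : Fin ctx.l)
    (νu : Fin ctx.l → ℂˣ) (τ : ctx.U ≃ₐ[ℂ] ctx.U)
    (hτ : ∀ α ∈ ctx.Δ, ∀ m : ℤ,
      τ (ctx.X α m) = ctx.charVal νu α • ctx.X α (m - α i)) :
    ∀ u ∈ ctx.Uplus, τ u ∈ ctx.Ii i := by
  intro u hu
  induction hu using Submodule.span_induction with
  | mem g hg =>
    obtain ⟨α, hα, m, hm, rfl⟩ := hg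
    rw [hτ α hα m]
    exact aux_smulC_mem ctx i _
      (aux_key ctx i (∑ j, α j).toNat α hα le_rfl (m - α i) (by omega))
  | zero =>
    simp only [map_zero]
    exact Submodule.zero_mem _
  | add a b _ _ ha hb =>
    rw [map_add]
    exact Submodule.add_mem _ ha hb
  | smul c v _ hv =>
    rw [smul_eq_mul, map_mul, ← smul_eq_mul]
    exact Submodule.smul_mem _ _ hv
end

section
/- Let i ≠ j be indices with m_{ij} = −1. Then for every t ∈ ℤ, the element Σ_{m₁, m₂ ≤ −1, m₁+m₂ = −t} x_{α_j}(m₁+1) x_{α_j}(m₂+1) x_{α_i}(−1) of U(𝔫̄) lies in I_{λ_0}. (Equivalently, σ_{ω_i,ν}(R^j_{−1,t}) ∈ I_{λ_0} for every character ν and every t ∈ ℤ.) -/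
namespace ADEContext

variable (ctx : ADEContext)

attribute [local instance] LieRing.ofAssociativeRing LieAlgebra.ofAssociativeAlgebra

/-- If `α + β` is not a root, then `x_α(m)` and `x_β(n)` commute in `U(𝔫̄)`. -/
lemma X_comm_of_not_mem {α β : Fin ctx.l → ℤ} (hα : α ∈ ctx.Δ) (hβ : β ∈ ctx.Δ)
    (h : α + β ∉ ctx.Δ) (m n : ℤ) :
    ctx.X α m * ctx.X β n = ctx.X β n * ctx.X α m := by
  have hb := ctx.bracket_x α hα β hβ m n
  rw [if_neg h] at hb
  have h2 : ctx.X α m * ctx.X β n - ctx.X β n * ctx.X α m = 0 := by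
    show UniversalEnvelopingAlgebra.ι ℂ (ctx.x α m) * UniversalEnvelopingAlgebra.ι ℂ (ctx.x β n)
      - UniversalEnvelopingAlgebra.ι ℂ (ctx.x β n) * UniversalEnvelopingAlgebra.ι ℂ (ctx.x α m) = 0
    rw [← Ring.lie_def, ← LieHom.map_lie, hb, map_zero]
  exact sub_eq_zero.mp h2

/-- If `α + β` is a root, then `x_α(m) x_β(n) = x_β(n) x_α(m) + C_{α,β} x_{α+β}(m+n)`. -/
lemma X_mul_X_of_mem {α β : Fin ctx.l → ℤ} (hα : α ∈ ctx.Δ) (hβ : β ∈ ctx.Δ)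
    (h : α + β ∈ ctx.Δ) (m n : ℤ) :
    ctx.X α m * ctx.X β n
      = ctx.X β n * ctx.X α m + ctx.C α β • ctx.X (α + β) (m + n) := by
  have hb := ctx.bracket_x α hα β hβ m n
  rw [if_pos h] at hb
  have h2 : ctx.X α m * ctx.X β n - ctx.X β n * ctx.X α m
      = ctx.C α β • ctx.X (α + β) (m + n) := by
    show UniversalEnvelopingAlgebra.ι ℂ (ctx.x α m) * UniversalEnvelopingAlgebra.ι ℂ (ctx.x β n)
      - UniversalEnvelopingAlgebra.ι ℂ (ctx.x β n) * UniversalEnvelopingAlgebra.ι ℂ (ctx.x α m)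
      = ctx.C α β • ctx.X (α + β) (m + n)
    rw [← Ring.lie_def, ← LieHom.map_lie, hb]
    simp [ADEContext.X]
  rw [sub_eq_iff_eq_add] at h2
  rw [h2, add_comm]

lemma R_mem_Jideal (j : Fin ctx.l) (t : ℤ) : ctx.R j t ∈ ctx.Jideal := by
  rcases le_or_gt 2 t with h | h
  · exact Submodule.subset_span ⟨j, t, h, rfl⟩
  · have h0 : ctx.R j t = 0 := by
      rw [ADEContext.R, Finset.Icc_eq_empty (by omega), Finset.sum_empty]
    rw [h0]; exact zero_mem _

lemma mul_R_mem_Jideal (u : ctx.U) (j : Fin ctx.l) (t : ℤ) :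
    u * ctx.R j t ∈ ctx.Jideal := by
  simpa [smul_eq_mul] using Submodule.smul_mem ctx.Jideal u (ctx.R_mem_Jideal j t)

lemma mul_X_mem_Uplus (u : ctx.U) {α : Fin ctx.l → ℤ} (hα : α ∈ ctx.Δ) {m : ℤ} (hm : 0 ≤ m) :
    u * ctx.X α m ∈ ctx.Uplus := by
  have hx : ctx.X α m ∈ ctx.Uplus := Submodule.subset_span ⟨α, hα, m, hm, rfl⟩
  simpa [smul_eq_mul] using Submodule.smul_mem ctx.Uplus u hx

end ADEContext

/-- Let `i ≠ j` be indices with `m_{ij} = -1`.  Then for every `t ∈ ℤ`, the element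
`∑_{m₁,m₂ ≤ -1, m₁+m₂=-t} x_{α_j}(m₁+1) x_{α_j}(m₂+1) x_{α_i}(-1)` of `U(𝔫̄)` lies in
`I_{λ_0}`. -/
theorem shifted_relation_mul_mem_I0 (ctx : ADEContext) (i j : Fin ctx.l) (hij : i ≠ j)
    (hM : ctx.M i j = -1) (t : ℤ) :
    ∑ m ∈ Finset.Icc (1 - t) (-1 : ℤ),
        ctx.X (ctx.sroot j) (m + 1) * ctx.X (ctx.sroot j) (-t - m + 1)
          * ctx.X (ctx.sroot i) (-1) ∈ ctx.I0 := by
  have hsi : ctx.sroot i ∈ ctx.Δ := ctx.simple_mem i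
  have hsj : ctx.sroot j ∈ ctx.Δ := ctx.simple_mem j
  set A : ℤ → ctx.U := ctx.X (ctx.sroot j) with hAdef
  set B : ℤ → ctx.U := ctx.X (ctx.sroot i) with hBdef
  set γ : Fin ctx.l → ℤ := ctx.sroot i + ctx.sroot j with hγdef
  set Cc : ℂ := ctx.C (ctx.sroot j) (ctx.sroot i) with hCcdef
  have hγΔ : γ ∈ ctx.Δ := (ctx.sum_simple_mem_iff i j).mpr ⟨hij, hM⟩
  have hMji : ctx.M j i = -1 := (ctx.M_symm.apply i j).trans hM
  have hji : ctx.sroot j + ctx.sroot i ∈ ctx.Δ :=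
    (ctx.sum_simple_mem_iff j i).mpr ⟨hij.symm, hMji⟩
  have hAA : ∀ m n : ℤ, A m * A n = A n * A m := by
    intro m n
    refine ctx.X_comm_of_not_mem hsj hsj ?_ m n
    intro hmem
    exact ((ctx.sum_simple_mem_iff j j).mp hmem).1 rfl
  have hAB : ∀ m n : ℤ, A m * B n = B n * A m + Cc • ctx.X γ (m + n) := by
    intro m n
    have h1 := ctx.X_mul_X_of_mem hsj hsi hji m n
    have h2 : ctx.sroot j + ctx.sroot i = γ := add_comm _ _
    rw [h2] at h1
    exact h1
  have hAXc : ∀ m n : ℤ, A m * ctx.X γ n = ctx.X γ n * A m := by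
    intro m n
    refine ctx.X_comm_of_not_mem hsj hγΔ ?_ m n
    intro hmem
    apply ctx.two_simple_add_not_mem j i
    have hkey : (2 : ℤ) • (Pi.single j 1 : Fin ctx.l → ℤ) + Pi.single i 1
        = ctx.sroot j + γ := by
      rw [hγdef]
      show (2 : ℤ) • (Pi.single j 1 : Fin ctx.l → ℤ) + Pi.single i 1
        = Pi.single j 1 + (Pi.single i 1 + Pi.single j 1)
      rw [two_smul]
      abel
    rw [hkey]
    exact hmem
  have hterm : ∀ p q r : ℤ, A p * A q * B r
      = B r * (A p * A q) + Cc • (A q * ctx.X γ (p + r)) + Cc • (A p * ctx.X γ (q + r)) := by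
    intro p q r
    calc A p * A q * B r = A p * (A q * B r) := by rw [mul_assoc]
      _ = A p * (B r * A q + Cc • ctx.X γ (q + r)) := by rw [hAB]
      _ = A p * B r * A q + Cc • (A p * ctx.X γ (q + r)) := by
            rw [mul_add, mul_smul_comm, mul_assoc]
      _ = (B r * A p + Cc • ctx.X γ (p + r)) * A q + Cc • (A p * ctx.X γ (q + r)) := by
            rw [hAB]
      _ = B r * (A p * A q) + Cc • (ctx.X γ (p + r) * A q) + Cc • (A p * ctx.X γ (q + r)) := by
            rw [add_mul, smul_mul_assoc, mul_assoc]
      _ = _ := by rw [← hAXc q (p + r)]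
  rcases lt_or_ge t 2 with ht | ht
  · rw [Finset.Icc_eq_empty (by omega), Finset.sum_empty]
    exact zero_mem _
  -- reindex the sum
  have hS : (∑ m ∈ Finset.Icc (1 - t) (-1 : ℤ), A (m + 1) * A (-t - m + 1) * B (-1))
      = ∑ k ∈ Finset.Icc (2 - t) 0, A k * A (2 - t - k) * B (-1) := by
    refine Finset.sum_nbij' (fun m => m + 1) (fun k => k - 1) ?_ ?_ ?_ ?_ ?_
    · intro a ha; simp only [Finset.mem_Icc] at *; omega
    · intro a ha; simp only [Finset.mem_Icc] at *; omega
    · intro a _; ring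
    · intro a _; ring
    · intro a _
      have e : -t - a + 1 = 2 - t - (a + 1) := by ring
      rw [e]
  rw [hS]
  have hsplit : ∀ k : ℤ, A k * A (2 - t - k) * B (-1)
      = B (-1) * (A k * A (2 - t - k)) + Cc • (A (2 - t - k) * ctx.X γ (k - 1))
        + Cc • (A k * ctx.X γ (1 - t - k)) := by
    intro k
    have h1 := hterm k (2 - t - k) (-1)
    have e1 : k + (-1 : ℤ) = k - 1 := by ring
    have e2 : 2 - t - k + (-1 : ℤ) = 1 - t - k := by ring
    rw [e1, e2] at h1
    exact h1
  rw [Finset.sum_congr rfl (fun k _ => hsplit k), Finset.sum_add_distrib,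
    Finset.sum_add_distrib, ← Finset.mul_sum, ← Finset.smul_sum, ← Finset.smul_sum]
  have hS1 : (∑ k ∈ Finset.Icc (2 - t) 0, A (2 - t - k) * ctx.X γ (k - 1))
      = ∑ k ∈ Finset.Icc (2 - t) 0, A k * ctx.X γ (1 - t - k) := by
    refine Finset.sum_nbij' (fun k => 2 - t - k) (fun k => 2 - t - k) ?_ ?_ ?_ ?_ ?_
    · intro a ha; simp only [Finset.mem_Icc] at *; omega
    · intro a ha; simp only [Finset.mem_Icc] at *; omega
    · intro a _; ring
    · intro a _; ring
    · intro a _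
      have e : a - 1 = 1 - t - (2 - t - a) := by ring
      rw [e]
  rw [hS1]
  -- the commutator identity with R j (t-1)
  have hRdef : ctx.R j (t - 1)
      = ∑ m ∈ Finset.Icc (2 - t) (-1 : ℤ), A m * A (1 - t - m) := by
    rw [ADEContext.R, hAdef]
    have e : (1 : ℤ) - (t - 1) = 2 - t := by ring
    rw [e]
    refine Finset.sum_congr rfl fun m _ => ?_
    have e2 : -(t - 1) - m = 1 - t - m := by ring
    rw [e2]
  have hre : (∑ m ∈ Finset.Icc (2 - t) (-1 : ℤ), A (1 - t - m) * ctx.X γ m)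
      = ∑ m ∈ Finset.Icc (2 - t) (-1 : ℤ), A m * ctx.X γ (1 - t - m) := by
    refine Finset.sum_nbij' (fun m => 1 - t - m) (fun m => 1 - t - m) ?_ ?_ ?_ ?_ ?_
    · intro a ha; simp only [Finset.mem_Icc] at *; omega
    · intro a ha; simp only [Finset.mem_Icc] at *; omega
    · intro a _; ring
    · intro a _; ring
    · intro a _
      have e : a = 1 - t - (1 - t - a) := by ring
      nth_rewrite 2 [e]
      rfl
  have hRB : ctx.R j (t - 1) * B 0
      = B 0 * ctx.R j (t - 1)
        + (Cc • (∑ m ∈ Finset.Icc (2 - t) (-1 : ℤ), A m * ctx.X γ (1 - t - m))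
          + Cc • (∑ m ∈ Finset.Icc (2 - t) (-1 : ℤ), A m * ctx.X γ (1 - t - m))) := by
    calc ctx.R j (t - 1) * B 0
        = ∑ m ∈ Finset.Icc (2 - t) (-1 : ℤ), A m * A (1 - t - m) * B 0 := by
          rw [hRdef, Finset.sum_mul]
      _ = ∑ m ∈ Finset.Icc (2 - t) (-1 : ℤ),
            (B 0 * (A m * A (1 - t - m)) + Cc • (A (1 - t - m) * ctx.X γ m)
              + Cc • (A m * ctx.X γ (1 - t - m))) := by
          refine Finset.sum_congr rfl fun m _ => ?_
          have h1 := hterm m (1 - t - m) 0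
          have e1 : m + (0 : ℤ) = m := by ring
          have e2 : 1 - t - m + (0 : ℤ) = 1 - t - m := by ring
          rw [e1, e2] at h1
          exact h1
      _ = B 0 * ctx.R j (t - 1)
            + (Cc • (∑ m ∈ Finset.Icc (2 - t) (-1 : ℤ), A (1 - t - m) * ctx.X γ m)
              + Cc • (∑ m ∈ Finset.Icc (2 - t) (-1 : ℤ), A m * ctx.X γ (1 - t - m))) := by
          rw [Finset.sum_add_distrib, Finset.sum_add_distrib, ← Finset.mul_sum,
            ← Finset.smul_sum, ← Finset.smul_sum, ← hRdef, add_assoc]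
      _ = _ := by rw [hre]
  -- split off the top of the Xγ-sum
  have hIccsplit : Finset.Icc (2 - t) (0 : ℤ) = insert (0 : ℤ) (Finset.Icc (2 - t) (-1)) := by
    ext a; simp only [Finset.mem_Icc, Finset.mem_insert]; omega
  have h0notin : (0 : ℤ) ∉ Finset.Icc (2 - t) (-1 : ℤ) := by
    simp only [Finset.mem_Icc]; omega
  have hQ : (∑ k ∈ Finset.Icc (2 - t) 0, A k * ctx.X γ (1 - t - k))
      = A 0 * ctx.X γ (1 - t) + ∑ k ∈ Finset.Icc (2 - t) (-1 : ℤ), A k * ctx.X γ (1 - t - k) := by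
    rw [hIccsplit, Finset.sum_insert h0notin]
    have e : (1 : ℤ) - t - 0 = 1 - t := by ring
    rw [e]
  -- split the AA-sum into R j (t-2) plus boundary
  have hP : ∃ W : ctx.U, (∑ k ∈ Finset.Icc (2 - t) 0, A k * A (2 - t - k))
      = ctx.R j (t - 2) + W * A 0 := by
    rcases eq_or_lt_of_le ht with ht2 | ht3
    · refine ⟨A 0, ?_⟩
      rw [← ht2]
      have hR0 : ctx.R j (2 - 2) = 0 := by
        rw [ADEContext.R, Finset.Icc_eq_empty (by norm_num), Finset.sum_empty]
      rw [hR0, zero_add]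
      norm_num
    · refine ⟨A (2 - t) + A (2 - t), ?_⟩
      have h1 : Finset.Icc (2 - t) (0 : ℤ)
          = insert (2 - t) (insert 0 (Finset.Icc (3 - t) (-1 : ℤ))) := by
        ext a; simp only [Finset.mem_Icc, Finset.mem_insert]; omega
      have hn1 : (2 - t) ∉ insert (0 : ℤ) (Finset.Icc (3 - t) (-1 : ℤ)) := by
        simp only [Finset.mem_insert, Finset.mem_Icc]; omega
      have hn2 : (0 : ℤ) ∉ Finset.Icc (3 - t) (-1 : ℤ) := by
        simp only [Finset.mem_Icc]; omega
      rw [h1, Finset.sum_insert hn1, Finset.sum_insert hn2]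
      have e1 : 2 - t - (2 - t) = (0 : ℤ) := by ring
      have e2 : 2 - t - (0 : ℤ) = 2 - t := by ring
      rw [e1, e2, hAA 0 (2 - t)]
      have hRd : ctx.R j (t - 2) = ∑ k ∈ Finset.Icc (3 - t) (-1 : ℤ), A k * A (2 - t - k) := by
        rw [ADEContext.R, hAdef]
        have e : (1 : ℤ) - (t - 2) = 3 - t := by ring
        rw [e]
        refine Finset.sum_congr rfl fun m _ => ?_
        have e3 : -(t - 2) - m = 2 - t - m := by ring
        rw [e3]
      rw [hRd, add_mul]
      abel
  obtain ⟨W, hPW⟩ := hP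
  rw [hPW, hQ, mul_add, ← mul_assoc, smul_add]
  -- memberships
  have hJle : ctx.Jideal ≤ ctx.I0 := le_sup_left
  have hUle : ctx.Uplus ≤ ctx.I0 := le_sup_right
  have m1 : B (-1) * ctx.R j (t - 2) ∈ ctx.I0 :=
    hJle (ctx.mul_R_mem_Jideal (B (-1)) j (t - 2))
  have m2 : B (-1) * W * A 0 ∈ ctx.I0 := by
    rw [hAdef]
    exact hUle (ctx.mul_X_mem_Uplus (B (-1) * W) hsj le_rfl)
  have m5 : Cc • (A 0 * ctx.X γ (1 - t)) ∈ ctx.I0 := by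
    rw [hAXc 0 (1 - t), hAdef]
    exact Submodule.smul_of_tower_mem _ Cc
      (hUle (ctx.mul_X_mem_Uplus (ctx.X γ (1 - t)) hsj le_rfl))
  have mQ' : Cc • (∑ m ∈ Finset.Icc (2 - t) (-1 : ℤ), A m * ctx.X γ (1 - t - m))
      + Cc • (∑ m ∈ Finset.Icc (2 - t) (-1 : ℤ), A m * ctx.X γ (1 - t - m)) ∈ ctx.I0 := by
    have heq : Cc • (∑ m ∈ Finset.Icc (2 - t) (-1 : ℤ), A m * ctx.X γ (1 - t - m))
        + Cc • (∑ m ∈ Finset.Icc (2 - t) (-1 : ℤ), A m * ctx.X γ (1 - t - m))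
        = ctx.R j (t - 1) * B 0 - B 0 * ctx.R j (t - 1) := by
      rw [hRB]; abel
    rw [heq]
    refine sub_mem ?_ ?_
    · rw [hBdef]
      exact hUle (ctx.mul_X_mem_Uplus (ctx.R j (t - 1)) hsi le_rfl)
    · exact hJle (ctx.mul_R_mem_Jideal (B 0) j (t - 1))
  -- assemble
  have goalEq : B (-1) * ctx.R j (t - 2) + B (-1) * W * A 0
      + (Cc • (A 0 * ctx.X γ (1 - t))
        + Cc • (∑ k ∈ Finset.Icc (2 - t) (-1 : ℤ), A k * ctx.X γ (1 - t - k)))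
      + (Cc • (A 0 * ctx.X γ (1 - t))
        + Cc • (∑ k ∈ Finset.Icc (2 - t) (-1 : ℤ), A k * ctx.X γ (1 - t - k)))
      ∈ ctx.I0 := by
    have := add_mem (add_mem (add_mem m1 m2) m5) (add_mem m5 mQ')
    -- rearrange
    have harr : B (-1) * ctx.R j (t - 2) + B (-1) * W * A 0
        + (Cc • (A 0 * ctx.X γ (1 - t))
          + Cc • (∑ k ∈ Finset.Icc (2 - t) (-1 : ℤ), A k * ctx.X γ (1 - t - k)))
        + (Cc • (A 0 * ctx.X γ (1 - t))
          + Cc • (∑ k ∈ Finset.Icc (2 - t) (-1 : ℤ), A k * ctx.X γ (1 - t - k)))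
        = B (-1) * ctx.R j (t - 2) + B (-1) * W * A 0 + Cc • (A 0 * ctx.X γ (1 - t))
          + (Cc • (A 0 * ctx.X γ (1 - t))
            + (Cc • (∑ k ∈ Finset.Icc (2 - t) (-1 : ℤ), A k * ctx.X γ (1 - t - k))
              + Cc • (∑ k ∈ Finset.Icc (2 - t) (-1 : ℤ), A k * ctx.X γ (1 - t - k)))) := by
      abel
    rw [harr]
    exact add_mem (add_mem (add_mem m1 m2) m5) (add_mem m5 mQ')
  exact goalEq
end

section
/- (Corollary 3.3) For every i = 1, …, l and all characters ν, ν′ : Q → ℂ^×, the composition σ_{ω_i,ν} ∘ τ_{λ_i,ν′} maps I_{λ_0} into itself: σ_{ω_i,ν}(τ_{λ_i,ν′}(I_{λ_0})) ⊆ I_{λ_0}. -/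
namespace ADECor33

open ADEContext Finset

variable (ctx : ADEContext)

attribute [local instance] LieRing.ofAssociativeRing

lemma X_sub_eq (α β : Fin ctx.l → ℤ) (hα : α ∈ ctx.Δ) (hβ : β ∈ ctx.Δ) (m n : ℤ) :
    ctx.X α m * ctx.X β n - ctx.X β n * ctx.X α m
      = if α + β ∈ ctx.Δ then ctx.C α β • ctx.X (α + β) (m + n) else 0 := by
  have h := ctx.bracket_x α hα β hβ m n
  have h2 : (UniversalEnvelopingAlgebra.ι ℂ : ctx.nbar →ₗ⁅ℂ⁆ ctx.U) ⁅ctx.x α m, ctx.x β n⁆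
      = ctx.X α m * ctx.X β n - ctx.X β n * ctx.X α m := by
    rw [LieHom.map_lie, Ring.lie_def]; rfl
  rw [h] at h2
  rw [← h2]
  split_ifs <;> simp [X]

lemma X_comm {α β : Fin ctx.l → ℤ} (hα : α ∈ ctx.Δ) (hβ : β ∈ ctx.Δ)
    (h : α + β ∉ ctx.Δ) (m n : ℤ) :
    ctx.X α m * ctx.X β n = ctx.X β n * ctx.X α m := by
  have := X_sub_eq ctx α β hα hβ m n
  rw [if_neg h, sub_eq_zero] at this
  exact this

lemma X_brak {α β : Fin ctx.l → ℤ} (hα : α ∈ ctx.Δ) (hβ : β ∈ ctx.Δ)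
    (h : α + β ∈ ctx.Δ) (m n : ℤ) :
    ctx.X α m * ctx.X β n
      = ctx.X β n * ctx.X α m + ctx.C α β • ctx.X (α + β) (m + n) := by
  have := X_sub_eq ctx α β hα hβ m n
  rw [if_pos h, sub_eq_iff_eq_add'] at this
  exact this

lemma mul_mem_left {u : ctx.U} (S : Submodule ctx.U ctx.U) (v : ctx.U) (hu : u ∈ S) :
    v * u ∈ S := by
  simpa [smul_eq_mul] using S.smul_mem v hu

lemma X_mem_Uplus {α : Fin ctx.l → ℤ} (hα : α ∈ ctx.Δ) {m : ℤ} (hm : 0 ≤ m) :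
    ctx.X α m ∈ ctx.Uplus :=
  Submodule.subset_span ⟨α, hα, m, hm, rfl⟩

lemma mul_X_mem_Uplus (u : ctx.U) {α : Fin ctx.l → ℤ} (hα : α ∈ ctx.Δ) {m : ℤ}
    (hm : 0 ≤ m) : u * ctx.X α m ∈ ctx.Uplus :=
  mul_mem_left ctx _ u (X_mem_Uplus ctx hα hm)

lemma R_mem_J (j : Fin ctx.l) {t : ℤ} (ht : 2 ≤ t) : ctx.R j t ∈ ctx.Jideal :=
  Submodule.subset_span ⟨j, t, ht, rfl⟩

lemma R_eq_zero (j : Fin ctx.l) {t : ℤ} (ht : t ≤ 1) : ctx.R j t = 0 := by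
  rw [R, Finset.Icc_eq_empty (by omega), Finset.sum_empty]

lemma csmul_mem (S : Submodule ctx.U ctx.U) (c : ℂ) {u : ctx.U} (hu : u ∈ S) :
    c • u ∈ S := by
  rw [← smul_one_smul ctx.U c u]
  exact S.smul_mem _ hu

lemma J_le_I0 : ctx.Jideal ≤ ctx.I0 := le_sup_left
lemma Uplus_le_I0 : ctx.Uplus ≤ ctx.I0 := le_sup_right

lemma sroot_mem : ctx.sroot i ∈ ctx.Δ := ctx.simple_mem i

lemma two_sroot_not_mem (i : Fin ctx.l) : ctx.sroot i + ctx.sroot i ∉ ctx.Δ := by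
  intro h
  exact ((ctx.sum_simple_mem_iff i i).1 h).1 rfl

lemma Xi_comm (i : Fin ctx.l) (m n : ℤ) :
    ctx.X (ctx.sroot i) m * ctx.X (ctx.sroot i) n
      = ctx.X (ctx.sroot i) n * ctx.X (ctx.sroot i) m :=
  X_comm ctx (sroot_mem ctx) (sroot_mem ctx) (two_sroot_not_mem ctx i) m n

lemma R_two (i : Fin ctx.l) :
    ctx.R i 2 = ctx.X (ctx.sroot i) (-1) * ctx.X (ctx.sroot i) (-1) := by
  rw [R]
  norm_num

lemma R_three (i : Fin ctx.l) :
    ctx.R i 3 = (2 : ℂ) • (ctx.X (ctx.sroot i) (-2) * ctx.X (ctx.sroot i) (-1)) := by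
  rw [R]
  have : Finset.Icc (1 - 3 : ℤ) (-1) = {-2, -1} := by decide
  rw [this, Finset.sum_insert (by decide), Finset.sum_singleton]
  norm_num [Xi_comm ctx i (-1) (-2), two_smul]

lemma sh_sroot (i j : Fin ctx.l) : (∑ k, ctx.M i k * (ctx.sroot j) k) = ctx.M i j := by
  rw [Finset.sum_eq_single j]
  · simp [sroot]
  · intro k _ hk
    simp [sroot, Pi.single_apply, hk]
  · simp

lemma sh_add (i : Fin ctx.l) (α β : Fin ctx.l → ℤ) :
    (∑ k, ctx.M i k * (α + β) k) = (∑ k, ctx.M i k * α k) + ∑ k, ctx.M i k * β k := by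
  rw [← Finset.sum_add_distrib]
  congr 1; ext k; simp [mul_add]



lemma M_symm_apply (i j : Fin ctx.l) : ctx.M j i = ctx.M i j := by
  have := ctx.M_symm
  rw [Matrix.IsSymm] at this
  conv_lhs => rw [← this]
  rfl

lemma ht_pos {β : Fin ctx.l → ℤ} (hβ : β ∈ ctx.Δ) : 1 ≤ ∑ k, β k := by
  have h0 : ∀ k ∈ Finset.univ, (0:ℤ) ≤ β k := fun k _ => ctx.Δ_nonneg β hβ k
  have hne : β ≠ 0 := ctx.Δ_ne_zero β hβ
  rcases eq_or_lt_of_le (Finset.sum_nonneg h0) with h | h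
  · exfalso
    apply hne
    funext k
    have := (Finset.sum_eq_zero_iff_of_nonneg h0).1 h.symm k (Finset.mem_univ k)
    simpa using this
  · omega

lemma keyD_simple (i j : Fin ctx.l) (m : ℤ) (hm : -ctx.M i j ≤ m) :
    ctx.X (ctx.sroot j) m * ctx.X (ctx.sroot i) (-1) ∈ ctx.I0 := by
  by_cases hij : j = i
  · subst hij
    have h2 := ctx.M_diag j
    rcases (by omega : m = -2 ∨ m = -1 ∨ 0 ≤ m) with h | h | h
    · subst h
      refine J_le_I0 ctx ?_
      have heq : ctx.X (ctx.sroot j) (-2) * ctx.X (ctx.sroot j) (-1)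
          = (2:ℂ)⁻¹ • ctx.R j 3 := by
        rw [R_three, smul_smul]
        norm_num
      rw [heq]
      exact csmul_mem ctx _ _ (R_mem_J ctx j (t := 3) (by norm_num))
    · subst h
      exact J_le_I0 ctx (by rw [← R_two]; exact R_mem_J ctx j (by norm_num))
    · rw [Xi_comm]
      refine Uplus_le_I0 ctx (mul_X_mem_Uplus ctx _ (sroot_mem ctx) (m := m) h)
  · rcases ctx.M_offdiag i j (fun h => hij h.symm) with h0 | h1
    · have hnot : ctx.sroot j + ctx.sroot i ∉ ctx.Δ := by
        intro hmem
        have hc := ((ctx.sum_simple_mem_iff j i).1 hmem).2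
        rw [M_symm_apply] at hc
        omega
      rw [X_comm ctx (sroot_mem ctx) (sroot_mem ctx) hnot]
      refine Uplus_le_I0 ctx (mul_X_mem_Uplus ctx _ (sroot_mem ctx) (m := m) (by omega))
    · have hmem : ctx.sroot j + ctx.sroot i ∈ ctx.Δ :=
        (ctx.sum_simple_mem_iff j i).2 ⟨hij, by rw [M_symm_apply]; omega⟩
      rw [X_brak ctx (sroot_mem ctx) (sroot_mem ctx) hmem]
      refine (ctx.I0).add_mem ?_ ?_
      · refine Uplus_le_I0 ctx (mul_X_mem_Uplus ctx _ (sroot_mem ctx) (m := m) (by omega))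
      · refine csmul_mem ctx _ _ (Uplus_le_I0 ctx (X_mem_Uplus ctx hmem (m := m + -1) (by omega)))

lemma keyD (i : Fin ctx.l) (n : ℕ) : ∀ (β : Fin ctx.l → ℤ), β ∈ ctx.Δ →
    (∑ k, β k) ≤ (n:ℤ) → ∀ m : ℤ, -(∑ k, ctx.M i k * β k) ≤ m →
    ctx.X β m * ctx.X (ctx.sroot i) (-1) ∈ ctx.I0 := by
  induction n with
  | zero =>
    intro β hβ hht m hm
    exact absurd (ht_pos ctx hβ) (by omega)
  | succ n ih =>
    intro β hβ hht m hm
    by_cases hs : ∃ k, β = ctx.sroot k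
    · obtain ⟨k, rfl⟩ := hs
      rw [sh_sroot] at hm
      exact keyD_simple ctx i k m hm
    · push_neg at hs
      obtain ⟨γ, hγ, j, hdec⟩ := ctx.Δ_decomp β hβ (fun k => hs k)
      have hdec' : β = γ + ctx.sroot j := hdec
      subst hdec'
      have hht' : (∑ k, γ k) ≤ (n:ℤ) := by
        have h1 : (∑ k, (γ + ctx.sroot j) k) = (∑ k, γ k) + 1 := by
          simp only [Pi.add_apply]
          rw [Finset.sum_add_distrib]
          simp [sroot]
        omega
      set S := ∑ k, ctx.M i k * γ k with hS
      have hshβ : (∑ k, ctx.M i k * (γ + ctx.sroot j) k) = S + ctx.M i j := by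
        rw [sh_add, sh_sroot]
      rw [hshβ] at hm
      set a : ℤ := -S with ha
      set b : ℤ := m + S with hb
      have hβmem : γ + ctx.sroot j ∈ ctx.Δ := hβ
      have hC0 : ctx.C γ (ctx.sroot j) ≠ 0 :=
        ctx.C_ne_zero γ hγ (ctx.sroot j) (sroot_mem ctx) hβmem
      have hbrak := X_brak ctx hγ (sroot_mem ctx) hβmem a b
      have hab : a + b = m := by omega
      rw [hab] at hbrak
      have hXβ : ctx.X (γ + ctx.sroot j) m
          = (ctx.C γ (ctx.sroot j))⁻¹ •
            (ctx.X γ a * ctx.X (ctx.sroot j) b - ctx.X (ctx.sroot j) b * ctx.X γ a) := by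
        rw [hbrak]
        rw [add_sub_cancel_left, smul_smul, inv_mul_cancel₀ hC0, one_smul]
      rw [hXβ, smul_mul_assoc, sub_mul, mul_assoc, mul_assoc]
      refine csmul_mem ctx _ _ ((ctx.I0).sub_mem ?_ ?_)
      · exact mul_mem_left ctx _ _ (keyD_simple ctx i j b (by omega))
      · exact mul_mem_left ctx _ _ (ih γ hγ hht' a (by omega))

end ADECor33

namespace ADECor33
open ADEContext Finset
variable (ctx : ADEContext)

lemma R_mem_J_all (j : Fin ctx.l) (s : ℤ) : ctx.R j s ∈ ctx.Jideal := by
  rcases le_or_gt 2 s with h | h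
  · exact R_mem_J ctx j h
  · rw [R_eq_zero ctx j (by omega)]; exact zero_mem _

lemma XX21 (i : Fin ctx.l) :
    ctx.X (ctx.sroot i) (-2) * ctx.X (ctx.sroot i) (-1) = (2⁻¹ : ℂ) • ctx.R i 3 := by
  rw [R_three, smul_smul]
  norm_num

lemma key_Ri (i : Fin ctx.l) (t : ℤ) (ht : 2 ≤ t) :
    (∑ m ∈ Finset.Icc (1-t) (-1:ℤ),
        ctx.X (ctx.sroot i) (m - 2) * ctx.X (ctx.sroot i) (-t - m - 2))
      * ctx.X (ctx.sroot i) (-1) ∈ ctx.I0 := by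
  have hsum : (∑ m ∈ Finset.Icc (1-t) (-1:ℤ),
        ctx.X (ctx.sroot i) (m - 2) * ctx.X (ctx.sroot i) (-t - m - 2))
      = ∑ n ∈ Finset.Icc (-t-1) (-3:ℤ),
        ctx.X (ctx.sroot i) n * ctx.X (ctx.sroot i) (-t-4-n) := by
    rw [show (-t-1 : ℤ) = 1-t + (-2) by ring, show (-3:ℤ) = -1 + (-2) by ring,
        ← Finset.map_add_right_Icc, Finset.sum_map]
    refine Finset.sum_congr rfl fun m _ => ?_
    simp only [addRightEmbedding_apply]
    rw [show m - 2 = m + -2 by ring, show -t - m - 2 = -t - 4 - (m + -2) by ring]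
  rw [hsum]
  have hsub : Finset.Icc (-t-1) (-3:ℤ) ⊆ Finset.Icc (-t-3) (-1:ℤ) := by
    intro n hn; simp only [Finset.mem_Icc] at *; omega
  have hR : ctx.R i (t+4) = ∑ n ∈ Finset.Icc (-t-3) (-1:ℤ),
      ctx.X (ctx.sroot i) n * ctx.X (ctx.sroot i) (-t-4-n) := by
    rw [R, show (1 - (t+4) : ℤ) = -t-3 by ring]
    refine Finset.sum_congr rfl fun n _ => ?_
    rw [show (-(t+4) - n : ℤ) = -t-4-n by ring]
  have hsplit := Finset.sum_sdiff
    (f := fun n => ctx.X (ctx.sroot i) n * ctx.X (ctx.sroot i) (-t-4-n)) hsub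
  have hexpr : (∑ n ∈ Finset.Icc (-t-1) (-3:ℤ),
        ctx.X (ctx.sroot i) n * ctx.X (ctx.sroot i) (-t-4-n))
      = ctx.R i (t+4) - ∑ n ∈ (Finset.Icc (-t-3) (-1:ℤ) \ Finset.Icc (-t-1) (-3:ℤ)),
          ctx.X (ctx.sroot i) n * ctx.X (ctx.sroot i) (-t-4-n) := by
    rw [hR, ← hsplit]
    abel
  rw [hexpr, sub_mul, Finset.sum_mul]
  refine (ctx.I0).sub_mem ?_ ?_
  · have hc : ctx.R i (t+4) * ctx.X (ctx.sroot i) (-1)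
        = ctx.X (ctx.sroot i) (-1) * ctx.R i (t+4) := by
      rw [R, Finset.sum_mul, Finset.mul_sum]
      refine Finset.sum_congr rfl fun n _ => ?_
      rw [mul_assoc, Xi_comm ctx i _ (-1), ← mul_assoc, Xi_comm ctx i n (-1), mul_assoc]
    rw [hc]
    exact J_le_I0 ctx (mul_mem_left ctx _ _ (R_mem_J ctx i (by omega)))
  · refine (ctx.I0).sum_mem fun n hn => ?_
    have hn4 : n = -1 ∨ n = -2 ∨ n = -t-2 ∨ n = -t-3 := by
      simp only [Finset.mem_sdiff, Finset.mem_Icc] at hn; omega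
    rcases hn4 with rfl | rfl | rfl | rfl
    · rw [show (-t-4 - (-1) : ℤ) = -t-3 by ring, Xi_comm ctx i (-1) (-t-3), mul_assoc,
        ← R_two]
      exact J_le_I0 ctx (mul_mem_left ctx _ _ (R_mem_J ctx i (by norm_num)))
    · rw [show (-t-4 - (-2) : ℤ) = -t-2 by ring, Xi_comm ctx i (-2) (-t-2), mul_assoc,
        XX21, mul_smul_comm]
      exact csmul_mem ctx _ _ (J_le_I0 ctx
        (mul_mem_left ctx _ _ (R_mem_J ctx i (by norm_num))))
    · rw [show (-t-4 - (-t-2) : ℤ) = -2 by ring, mul_assoc, XX21, mul_smul_comm]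
      exact csmul_mem ctx _ _ (J_le_I0 ctx
        (mul_mem_left ctx _ _ (R_mem_J ctx i (by norm_num))))
    · rw [show (-t-4 - (-t-3) : ℤ) = -1 by ring, mul_assoc, ← R_two]
      exact J_le_I0 ctx (mul_mem_left ctx _ _ (R_mem_J ctx i (by norm_num)))

end ADECor33

namespace ADECor33
open ADEContext Finset
variable (ctx : ADEContext)

lemma sum_shift (f : ℤ → ctx.U) (a b c : ℤ) :
    ∑ m ∈ Finset.Icc a b, f (m + c) = ∑ n ∈ Finset.Icc (a + c) (b + c), f n := by
  rw [← Finset.map_add_right_Icc, Finset.sum_map]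
  rfl

lemma sum_reflect (f : ℤ → ctx.U) (a b : ℤ) :
    ∑ m ∈ Finset.Icc a b, f m = ∑ m ∈ Finset.Icc a b, f (a + b - m) := by
  refine Finset.sum_nbij' (fun m => a + b - m) (fun m => a + b - m)
    (fun m hm => ?_) (fun m hm => ?_) (fun m hm => by omega)
    (fun m hm => by omega) (fun m hm => ?_)
  · simp only [Finset.mem_Icc] at *; omega
  · simp only [Finset.mem_Icc] at *; omega
  · congr 1; omega

lemma key_R0 (i j : Fin ctx.l) (hij : j ≠ i) (h0 : ctx.M i j = 0) (t : ℤ) (ht : 2 ≤ t) :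
    ctx.R j t * ctx.X (ctx.sroot i) (-1) ∈ ctx.I0 := by
  have hnot : ctx.sroot j + ctx.sroot i ∉ ctx.Δ := by
    intro hmem
    have hc := ((ctx.sum_simple_mem_iff j i).1 hmem).2
    rw [M_symm_apply] at hc; omega
  have hc : ctx.R j t * ctx.X (ctx.sroot i) (-1)
      = ctx.X (ctx.sroot i) (-1) * ctx.R j t := by
    rw [R, Finset.sum_mul, Finset.mul_sum]
    refine Finset.sum_congr rfl fun n _ => ?_
    rw [mul_assoc, X_comm ctx (sroot_mem ctx) (sroot_mem ctx) hnot _ (-1),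
        ← mul_assoc, X_comm ctx (sroot_mem ctx) (sroot_mem ctx) hnot n (-1), mul_assoc]
  rw [hc]
  exact J_le_I0 ctx (mul_mem_left ctx _ _ (R_mem_J ctx j ht))

lemma key_Rneg (i j : Fin ctx.l) (hij : i ≠ j) (h1 : ctx.M i j = -1) (t : ℤ) (ht : 2 ≤ t) :
    (∑ m ∈ Finset.Icc (1-t) (-1:ℤ),
        ctx.X (ctx.sroot j) (m + 1) * ctx.X (ctx.sroot j) (-t - m + 1))
      * ctx.X (ctx.sroot i) (-1) ∈ ctx.I0 := by
  set δ : Fin ctx.l → ℤ := ctx.sroot i + ctx.sroot j with hδdef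
  have hδ : δ ∈ ctx.Δ := (ctx.sum_simple_mem_iff i j).2 ⟨hij, h1⟩
  have hδ' : ctx.sroot j + ctx.sroot i = δ := add_comm _ _
  set Cji := ctx.C (ctx.sroot j) (ctx.sroot i) with hCjidef
  set Cij := ctx.C (ctx.sroot i) (ctx.sroot j) with hCijdef
  have hCij : Cij ≠ 0 := ctx.C_ne_zero _ (sroot_mem ctx) _ (sroot_mem ctx) hδ
  -- bracket and commutation facts
  have hbJI : ∀ a b : ℤ, ctx.X (ctx.sroot j) a * ctx.X (ctx.sroot i) b
      = ctx.X (ctx.sroot i) b * ctx.X (ctx.sroot j) a + Cji • ctx.X δ (a + b) := by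
    intro a b
    have h := X_brak ctx (sroot_mem ctx (i := j)) (sroot_mem ctx (i := i))
      (show ctx.sroot j + ctx.sroot i ∈ ctx.Δ from hδ' ▸ hδ) a b
    rw [hδ'] at h
    exact h
  have hbIJ : ∀ a b : ℤ, ctx.X (ctx.sroot i) a * ctx.X (ctx.sroot j) b
      = ctx.X (ctx.sroot j) b * ctx.X (ctx.sroot i) a + Cij • ctx.X δ (a + b) := by
    intro a b
    exact X_brak ctx (sroot_mem ctx) (sroot_mem ctx) (hδdef ▸ hδ) a b
  have hnotJD : ctx.sroot j + δ ∉ ctx.Δ := by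
    intro h
    apply ctx.two_simple_add_not_mem j i
    have he : (2:ℤ) • (Pi.single j 1 : Fin ctx.l → ℤ) + Pi.single i 1
        = ctx.sroot j + δ := by
      rw [two_smul, hδdef]
      show _ = ctx.sroot j + (ctx.sroot i + ctx.sroot j)
      unfold ADEContext.sroot
      abel
    rw [he]
    exact h
  have hcJD : ∀ a b : ℤ, ctx.X (ctx.sroot j) a * ctx.X δ b
      = ctx.X δ b * ctx.X (ctx.sroot j) a :=
    fun a b => X_comm ctx (sroot_mem ctx) hδ hnotJD a b
  -- reindex the sum
  have hsum : (∑ m ∈ Finset.Icc (1-t) (-1:ℤ),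
        ctx.X (ctx.sroot j) (m + 1) * ctx.X (ctx.sroot j) (-t - m + 1))
      = ∑ n ∈ Finset.Icc (2-t) (0:ℤ),
        ctx.X (ctx.sroot j) n * ctx.X (ctx.sroot j) (2-t-n) := by
    have h := sum_shift ctx
      (fun n => ctx.X (ctx.sroot j) n * ctx.X (ctx.sroot j) (2-t-n)) (1-t) (-1) 1
    rw [show (1-t+1 : ℤ) = 2-t by ring, show ((-1:ℤ)+1 : ℤ) = 0 by ring] at h
    rw [← h]
    refine Finset.sum_congr rfl fun m _ => ?_
    rw [show -t - m + 1 = 2 - t - (m + 1) by ring]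
  rw [hsum, Finset.sum_mul]
  -- expand each term
  have hterm : ∀ n : ℤ, (ctx.X (ctx.sroot j) n * ctx.X (ctx.sroot j) (2-t-n))
        * ctx.X (ctx.sroot i) (-1)
      = ctx.X (ctx.sroot i) (-1) * (ctx.X (ctx.sroot j) n * ctx.X (ctx.sroot j) (2-t-n))
        + Cji • (ctx.X δ (n - 1) * ctx.X (ctx.sroot j) (2-t-n))
        + Cji • (ctx.X δ (1-t-n) * ctx.X (ctx.sroot j) n) := by
    intro n
    calc (ctx.X (ctx.sroot j) n * ctx.X (ctx.sroot j) (2-t-n)) * ctx.X (ctx.sroot i) (-1)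
        = ctx.X (ctx.sroot j) n * (ctx.X (ctx.sroot j) (2-t-n) * ctx.X (ctx.sroot i) (-1)) := by
          rw [mul_assoc]
      _ = ctx.X (ctx.sroot j) n * (ctx.X (ctx.sroot i) (-1) * ctx.X (ctx.sroot j) (2-t-n)
            + Cji • ctx.X δ (2-t-n + -1)) := by rw [hbJI]
      _ = (ctx.X (ctx.sroot j) n * ctx.X (ctx.sroot i) (-1)) * ctx.X (ctx.sroot j) (2-t-n)
            + Cji • (ctx.X (ctx.sroot j) n * ctx.X δ (2-t-n + -1)) := by
          rw [mul_add, mul_smul_comm, mul_assoc]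
      _ = (ctx.X (ctx.sroot i) (-1) * ctx.X (ctx.sroot j) n + Cji • ctx.X δ (n + -1))
            * ctx.X (ctx.sroot j) (2-t-n)
            + Cji • (ctx.X δ (2-t-n + -1) * ctx.X (ctx.sroot j) n) := by
          rw [hbJI, hcJD]
      _ = ctx.X (ctx.sroot i) (-1) * (ctx.X (ctx.sroot j) n * ctx.X (ctx.sroot j) (2-t-n))
            + Cji • (ctx.X δ (n - 1) * ctx.X (ctx.sroot j) (2-t-n))
            + Cji • (ctx.X δ (1-t-n) * ctx.X (ctx.sroot j) n) := by
          rw [add_mul, smul_mul_assoc, mul_assoc, show n + -1 = n - 1 by ring,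
            show 2-t-n + -1 = 1-t-n by ring]
  rw [Finset.sum_congr rfl fun n _ => hterm n, Finset.sum_add_distrib,
    Finset.sum_add_distrib, ← Finset.mul_sum, ← Finset.smul_sum, ← Finset.smul_sum]
  -- the three pieces
  have hS1 : (∑ n ∈ Finset.Icc (2-t) (0:ℤ),
      ctx.X δ (n - 1) * ctx.X (ctx.sroot j) (2-t-n)) ∈ ctx.I0 := by
    -- reindex p = n - 1
    have hre : (∑ n ∈ Finset.Icc (2-t) (0:ℤ),
          ctx.X δ (n - 1) * ctx.X (ctx.sroot j) (2-t-n))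
        = ∑ p ∈ Finset.Icc (1-t) (-1:ℤ), ctx.X δ p * ctx.X (ctx.sroot j) (1-t-p) := by
      have h := sum_shift ctx
        (fun p => ctx.X δ p * ctx.X (ctx.sroot j) (1-t-p)) (2-t) 0 (-1)
      rw [show (2-t + -1 : ℤ) = 1-t by ring, show ((0:ℤ) + -1 : ℤ) = -1 by ring] at h
      rw [← h]
      refine Finset.sum_congr rfl fun n _ => ?_
      rw [show n - 1 = n + -1 by ring, show 2-t-n = 1 - t - (n + -1) by ring]
    rw [hre]
    have hsub : Finset.Icc (2-t) (-1:ℤ) ⊆ Finset.Icc (1-t) (-1:ℤ) := by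
      intro p hp; simp only [Finset.mem_Icc] at *; omega
    rw [← Finset.sum_sdiff (f := fun p => ctx.X δ p * ctx.X (ctx.sroot j) (1-t-p)) hsub]
    refine (ctx.I0).add_mem ?_ ?_
    · refine (ctx.I0).sum_mem fun p hp => ?_
      have hp1 : p = 1 - t := by
        simp only [Finset.mem_sdiff, Finset.mem_Icc] at hp; omega
      subst hp1
      rw [show 1 - t - (1-t) = (0:ℤ) by ring]
      exact Uplus_le_I0 ctx (mul_X_mem_Uplus ctx _ (sroot_mem ctx) le_rfl)
    · -- B := ∑_{p ∈ Icc(2-t,-1)} X_δ p * X_j (1-t-p) via bracket with R j (t-1)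
      have hR1 : ctx.R j (t-1) = ∑ m ∈ Finset.Icc (2-t) (-1:ℤ),
          ctx.X (ctx.sroot j) m * ctx.X (ctx.sroot j) (1-t-m) := by
        rw [R, show (1 - (t-1) : ℤ) = 2-t by ring]
        refine Finset.sum_congr rfl fun m _ => ?_
        rw [show (-(t-1) - m : ℤ) = 1-t-m by ring]
      have hcomp : ∀ m : ℤ, ctx.X (ctx.sroot i) 0
            * (ctx.X (ctx.sroot j) m * ctx.X (ctx.sroot j) (1-t-m))
          = (ctx.X (ctx.sroot j) m * ctx.X (ctx.sroot j) (1-t-m)) * ctx.X (ctx.sroot i) 0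
            + Cij • (ctx.X δ (1-t-m) * ctx.X (ctx.sroot j) m)
            + Cij • (ctx.X δ m * ctx.X (ctx.sroot j) (1-t-m)) := by
        intro m
        calc ctx.X (ctx.sroot i) 0 * (ctx.X (ctx.sroot j) m * ctx.X (ctx.sroot j) (1-t-m))
            = (ctx.X (ctx.sroot i) 0 * ctx.X (ctx.sroot j) m) * ctx.X (ctx.sroot j) (1-t-m) := by
              rw [mul_assoc]
          _ = (ctx.X (ctx.sroot j) m * ctx.X (ctx.sroot i) 0 + Cij • ctx.X δ (0 + m))
                * ctx.X (ctx.sroot j) (1-t-m) := by rw [hbIJ]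
          _ = ctx.X (ctx.sroot j) m * (ctx.X (ctx.sroot i) 0 * ctx.X (ctx.sroot j) (1-t-m))
                + Cij • (ctx.X δ (0 + m) * ctx.X (ctx.sroot j) (1-t-m)) := by
              rw [add_mul, smul_mul_assoc, mul_assoc]
          _ = ctx.X (ctx.sroot j) m * (ctx.X (ctx.sroot j) (1-t-m) * ctx.X (ctx.sroot i) 0
                + Cij • ctx.X δ (0 + (1-t-m)))
                + Cij • (ctx.X δ m * ctx.X (ctx.sroot j) (1-t-m)) := by
              rw [hbIJ, show (0 + m : ℤ) = m by ring]
          _ = (ctx.X (ctx.sroot j) m * ctx.X (ctx.sroot j) (1-t-m)) * ctx.X (ctx.sroot i) 0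
                + Cij • (ctx.X δ (1-t-m) * ctx.X (ctx.sroot j) m)
                + Cij • (ctx.X δ m * ctx.X (ctx.sroot j) (1-t-m)) := by
              rw [mul_add, mul_smul_comm, ← mul_assoc, hcJD,
                show (0 + (1-t-m) : ℤ) = 1-t-m by ring]
      have hrefl : (∑ m ∈ Finset.Icc (2-t) (-1:ℤ),
            ctx.X δ (1-t-m) * ctx.X (ctx.sroot j) m)
          = ∑ m ∈ Finset.Icc (2-t) (-1:ℤ), ctx.X δ m * ctx.X (ctx.sroot j) (1-t-m) := by
        rw [sum_reflect ctx (fun m => ctx.X δ (1-t-m) * ctx.X (ctx.sroot j) m) (2-t) (-1)]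
        refine Finset.sum_congr rfl fun m _ => ?_
        rw [show 1 - t - (2 - t + -1 - m) = m by ring, show (2 - t + -1 - m : ℤ) = 1-t-m by ring]
      have hXR : ctx.X (ctx.sroot i) 0 * ctx.R j (t-1)
          = ctx.R j (t-1) * ctx.X (ctx.sroot i) 0
            + ((2:ℂ) * Cij) • ∑ m ∈ Finset.Icc (2-t) (-1:ℤ),
                ctx.X δ m * ctx.X (ctx.sroot j) (1-t-m) := by
        rw [hR1, Finset.mul_sum, Finset.sum_mul,
          Finset.sum_congr rfl fun m _ => hcomp m, Finset.sum_add_distrib,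
          Finset.sum_add_distrib, ← Finset.smul_sum, ← Finset.smul_sum, hrefl,
          add_assoc, ← add_smul]
        congr 2
        ring
      have hB : (∑ m ∈ Finset.Icc (2-t) (-1:ℤ),
            ctx.X δ m * ctx.X (ctx.sroot j) (1-t-m))
          = ((2:ℂ) * Cij)⁻¹ • (ctx.X (ctx.sroot i) 0 * ctx.R j (t-1)
              - ctx.R j (t-1) * ctx.X (ctx.sroot i) 0) := by
        rw [hXR, add_sub_cancel_left, smul_smul,
          inv_mul_cancel₀ (mul_ne_zero two_ne_zero hCij), one_smul]
      rw [hB]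
      refine csmul_mem ctx _ _ ((ctx.I0).sub_mem ?_ ?_)
      · exact J_le_I0 ctx (mul_mem_left ctx _ _ (R_mem_J_all ctx j (t-1)))
      · exact Uplus_le_I0 ctx (mul_X_mem_Uplus ctx _ (sroot_mem ctx) le_rfl)
  refine (ctx.I0).add_mem ((ctx.I0).add_mem ?_ ?_) ?_
  · -- X_i(-1) * A
    have hsub : Finset.Icc (3-t) (-1:ℤ) ⊆ Finset.Icc (2-t) (0:ℤ) := by
      intro n hn; simp only [Finset.mem_Icc] at *; omega
    rw [← Finset.sum_sdiff
      (f := fun n => ctx.X (ctx.sroot j) n * ctx.X (ctx.sroot j) (2-t-n)) hsub, mul_add]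
    refine (ctx.I0).add_mem ?_ ?_
    · rw [Finset.mul_sum]
      refine (ctx.I0).sum_mem fun n hn => ?_
      have hn2 : n = 0 ∨ n = 2 - t := by
        simp only [Finset.mem_sdiff, Finset.mem_Icc] at hn; omega
      rcases hn2 with rfl | rfl
      · rw [Xi_comm ctx j 0 (2-t-0), ← mul_assoc]
        exact Uplus_le_I0 ctx (mul_X_mem_Uplus ctx _ (sroot_mem ctx) le_rfl)
      · rw [show 2 - t - (2-t) = (0:ℤ) by ring, ← mul_assoc]
        exact Uplus_le_I0 ctx (mul_X_mem_Uplus ctx _ (sroot_mem ctx) le_rfl)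
    · have hR2 : ctx.R j (t-2) = ∑ n ∈ Finset.Icc (3-t) (-1:ℤ),
          ctx.X (ctx.sroot j) n * ctx.X (ctx.sroot j) (2-t-n) := by
        rw [R, show (1 - (t-2) : ℤ) = 3-t by ring]
        refine Finset.sum_congr rfl fun n _ => ?_
        rw [show (-(t-2) - n : ℤ) = 2-t-n by ring]
      rw [← hR2]
      exact J_le_I0 ctx (mul_mem_left ctx _ _ (R_mem_J_all ctx j (t-2)))
  · exact csmul_mem ctx _ _ hS1
  · -- reflected copy
    have hrefl2 : (∑ n ∈ Finset.Icc (2-t) (0:ℤ),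
          ctx.X δ (1-t-n) * ctx.X (ctx.sroot j) n)
        = ∑ n ∈ Finset.Icc (2-t) (0:ℤ),
          ctx.X δ (n - 1) * ctx.X (ctx.sroot j) (2-t-n) := by
      rw [sum_reflect ctx (fun n => ctx.X δ (1-t-n) * ctx.X (ctx.sroot j) n) (2-t) 0]
      refine Finset.sum_congr rfl fun n _ => ?_
      rw [show 1 - t - (2 - t + 0 - n) = n - 1 by ring, show (2 - t + 0 - n : ℤ) = 2-t-n by ring]
    rw [hrefl2]
    exact csmul_mem ctx _ _ hS1

end ADECor33

/-- (Corollary 3.3)  For every `i = 1, …, l` and all characters `ν, ν' : Q → ℂ^×`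
(determined by their values `νu j = ν(α_j)`, `νu' j = ν'(α_j)`), the composition
`σ_{ω_i,ν} ∘ τ_{λ_i,ν'}` maps `I_{λ_0}` into itself.  Here `τ'` is the extension to
`U(𝔫̄)` of `τ_{λ_i,ν'}` (acting on generators by `x_α(m) ↦ ν'(α) x_α(m - α^i)`), `τ` is
the extension of `τ_{ω_i,ν}` (acting by `x_α(m) ↦ ν(α) x_α(m - ((∑_j m_{ij} α^j) - α^i))`),
and `σ_{ω_i,ν}(a) = τ(a) x_{α_i}(-1)`. -/
theorem sigma_omega_comp_tau_lambda_maps_I0_into_I0 (ctx : ADEContext) (i : Fin ctx.l)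
    (νu νu' : Fin ctx.l → ℂˣ) (τ τ' : ctx.U ≃ₐ[ℂ] ctx.U)
    (hτ : ∀ α ∈ ctx.Δ, ∀ m : ℤ,
      τ (ctx.X α m) = ctx.charVal νu α • ctx.X α (m - ((∑ j, ctx.M i j * α j) - α i)))
    (hτ' : ∀ α ∈ ctx.Δ, ∀ m : ℤ,
      τ' (ctx.X α m) = ctx.charVal νu' α • ctx.X α (m - α i)) :
    ∀ u ∈ ctx.I0, τ (τ' u) * ctx.X (ctx.sroot i) (-1) ∈ ctx.I0 := by
  have hφX : ∀ α ∈ ctx.Δ, ∀ m : ℤ, τ (τ' (ctx.X α m))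
      = (ctx.charVal νu' α * ctx.charVal νu α) • ctx.X α (m - (∑ k, ctx.M i k * α k)) := by
    intro α hα m
    rw [hτ' α hα m, map_smul, hτ α hα (m - α i), smul_smul,
      show m - α i - ((∑ k, ctx.M i k * α k) - α i) = m - ∑ k, ctx.M i k * α k by ring]
  intro u hu
  let K : Submodule ctx.U ctx.U :=
    { carrier := {u | τ (τ' u) * ctx.X (ctx.sroot i) (-1) ∈ ctx.I0}
      add_mem' := by
        intro a b ha hb
        simp only [Set.mem_setOf_eq] at *
        rw [map_add, map_add, add_mul]
        exact (ctx.I0).add_mem ha hb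
      zero_mem' := by
        simp only [Set.mem_setOf_eq, map_zero, zero_mul]
        exact zero_mem _
      smul_mem' := by
        intro c a ha
        simp only [Set.mem_setOf_eq, smul_eq_mul, map_mul] at *
        rw [mul_assoc]
        exact ADECor33.mul_mem_left ctx _ _ ha }
  suffices hK : ctx.I0 ≤ K from hK hu
  refine sup_le ?_ ?_
  · rw [ADEContext.Jideal, Submodule.span_le]
    rintro _ ⟨j, t, ht, rfl⟩
    show τ (τ' (ctx.R j t)) * ctx.X (ctx.sroot i) (-1) ∈ ctx.I0
    have hφR : τ (τ' (ctx.R j t))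
        = ((ctx.charVal νu' (ctx.sroot j) * ctx.charVal νu (ctx.sroot j))
            * (ctx.charVal νu' (ctx.sroot j) * ctx.charVal νu (ctx.sroot j)))
          • ∑ m ∈ Finset.Icc (1-t) (-1:ℤ),
              ctx.X (ctx.sroot j) (m - ctx.M i j)
                * ctx.X (ctx.sroot j) (-t - m - ctx.M i j) := by
      rw [show ctx.R j t = ∑ m ∈ Finset.Icc (1-t) (-1:ℤ),
          ctx.X (ctx.sroot j) m * ctx.X (ctx.sroot j) (-t - m) from rfl,
        map_sum, map_sum, Finset.smul_sum]
      refine Finset.sum_congr rfl fun m _ => ?_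
      rw [map_mul, map_mul, hφX _ (ADECor33.sroot_mem ctx) m,
        hφX _ (ADECor33.sroot_mem ctx) (-t - m), ADECor33.sh_sroot ctx i j,
        smul_mul_assoc, mul_smul_comm, smul_smul]
    rw [hφR, smul_mul_assoc]
    refine ADECor33.csmul_mem ctx _ _ ?_
    by_cases hji : j = i
    · subst hji
      rw [ctx.M_diag j]
      exact ADECor33.key_Ri ctx j t ht
    · rcases ctx.M_offdiag i j (fun h => hji h.symm) with h0 | h1
      · rw [h0]
        simp only [sub_zero]
        exact ADECor33.key_R0 ctx i j hji h0 t ht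
      · rw [h1]
        simp only [sub_neg_eq_add]
        exact ADECor33.key_Rneg ctx i j (fun h => hji h.symm) h1 t ht
  · rw [ADEContext.Uplus, Submodule.span_le]
    rintro _ ⟨α, hα, m, hm, rfl⟩
    show τ (τ' (ctx.X α m)) * ctx.X (ctx.sroot i) (-1) ∈ ctx.I0
    rw [hφX α hα m, smul_mul_assoc]
    refine ADECor33.csmul_mem ctx _ _ ?_
    refine ADECor33.keyD ctx i (∑ k, α k).toNat α hα (Int.self_le_toNat _)
      (m - ∑ k, ctx.M i k * α k) (by omega)
end
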